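/- arXiv:1104.2502 — 5 statements merged into one kernel-verified Lean document; each statement's English description precedes it below -/
import Mathlib

section
/- For an n×n Hermitian matrix A and a family of mutually orthogonal projections P₁,...,P_r summing to the identity, the eigenvalue vector of A (in non-increasing order) majorizes the eigenvalue vector of ∑ᵢ PᵢAPᵢ. -/
open scoped ComplexOrder


lemma card_filter_lt' {n m : ℕ} (hm : m ≤ n) :
    (Finset.univ.filter (fun i : Fin n => (i : ℕ) < m)).card = m := by
  have h : (Finset.univ.filter (fun i : Fin n => (i : ℕ) < m)).map Fin.valEmbedding
      = Finset.range m := by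
    ext x
    simp only [Finset.mem_map, Finset.mem_filter, Finset.mem_univ, true_and,
      Fin.valEmbedding_apply, Finset.mem_range]
    constructor
    · rintro ⟨i, hi, rfl⟩; exact hi
    · intro hx; exact ⟨⟨x, lt_of_lt_of_le hx hm⟩, hx, rfl⟩
  have := congrArg Finset.card h
  simpa using this

lemma trace_diag_mul {n : ℕ} (v : Fin n → ℂ) (X : Matrix (Fin n) (Fin n) ℂ) :
    (Matrix.diagonal v * X).trace = ∑ i, v i * X i i := by
  simp [Matrix.trace, Matrix.diag, Matrix.mul_apply, Matrix.diagonal_apply, ite_mul]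

lemma thresh {n : ℕ} (f d : Fin n → ℝ) (hf : Antitone f)
    (hd0 : ∀ i, 0 ≤ d i) (hd1 : ∀ i, d i ≤ 1) (m : ℕ) (hm : m ≤ n)
    (hsum : ∑ i, d i = m) :
    ∑ i, f i * d i ≤ ∑ i ∈ Finset.univ.filter (fun i : Fin n => (i : ℕ) < m), f i := by
  rcases Nat.eq_zero_or_pos m with hm0 | hm0
  · subst hm0
    have hz : ∀ i ∈ Finset.univ, d i = 0 := by
      intro i _
      exact (Finset.sum_eq_zero_iff_of_nonneg (fun i _ => hd0 i)).mp (by simpa using hsum) i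
        (Finset.mem_univ i)
    simp only [Nat.cast_zero] at hsum
    have : ∀ i, d i = 0 := fun i => hz i (Finset.mem_univ i)
    simp [this]
  · set S := Finset.univ.filter (fun i : Fin n => (i : ℕ) < m) with hS
    set t := f ⟨m - 1, by omega⟩ with ht
    have hcard : S.card = m := card_filter_lt' hm
    have split : ∑ i, f i * d i = ∑ i ∈ S, f i * d i + ∑ i ∈ Sᶜ, f i * d i :=
      (Finset.sum_add_sum_compl S _).symm
    have hle1 : ∀ i ∈ S, f i * d i ≤ f i + t * (d i - 1) := by
      intro i hi
      have him : (i : ℕ) < m := (Finset.mem_filter.mp hi).2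
      have hfi : t ≤ f i := hf (by simp [Fin.le_def]; omega)
      nlinarith [hd1 i, hd0 i]
    have hle2 : ∀ i ∈ Sᶜ, f i * d i ≤ t * d i := by
      intro i hi
      have him : ¬ (i : ℕ) < m := by
        simpa [hS] using (Finset.mem_compl.mp hi)
      have hfi : f i ≤ t := hf (by simp [Fin.le_def]; omega)
      nlinarith [hd0 i]
    calc ∑ i, f i * d i = ∑ i ∈ S, f i * d i + ∑ i ∈ Sᶜ, f i * d i := split
      _ ≤ (∑ i ∈ S, (f i + t * (d i - 1))) + ∑ i ∈ Sᶜ, t * d i := by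
          exact add_le_add (Finset.sum_le_sum hle1) (Finset.sum_le_sum hle2)
      _ = ∑ i ∈ S, f i + t * ((∑ i ∈ S, d i + ∑ i ∈ Sᶜ, d i) - m) := by
          rw [Finset.sum_add_distrib, ← Finset.mul_sum, ← Finset.mul_sum]
          have : ∑ i ∈ S, (d i - 1) = ∑ i ∈ S, d i - m := by
            rw [Finset.sum_sub_distrib]
            simp [hcard]
          rw [this]; ring
      _ = ∑ i ∈ S, f i := by
          rw [Finset.sum_add_sum_compl S d, hsum]; ring_nf

lemma diag_entry_nonneg {n : ℕ} {N : Matrix (Fin n) (Fin n) ℂ} (h : N.PosSemidef)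
    (j : Fin n) : 0 ≤ N j j := by
  exact h.diag_nonneg

lemma sum_conj_psd {n r : ℕ} (P : Fin r → Matrix (Fin n) (Fin n) ℂ)
    (hP : ∀ i, (P i).IsHermitian) {Q : Matrix (Fin n) (Fin n) ℂ} (hQ : Q.PosSemidef) :
    (∑ i, P i * Q * P i).PosSemidef := by
  refine Finset.sum_induction _ _ (fun a b ha hb => ha.add hb) Matrix.PosSemidef.zero
    (fun i _ => ?_)
  have := hQ.mul_mul_conjTranspose_same (P i)
  rwa [hP i] at this

lemma trace_herm_mul {n : ℕ} {A : Matrix (Fin n) (Fin n) ℂ} (hA : A.IsHermitian)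
    (M : Matrix (Fin n) (Fin n) ℂ) :
    (A * M).trace = ∑ j, (hA.eigenvalues j : ℂ) *
      ((star (hA.eigenvectorUnitary : Matrix (Fin n) (Fin n) ℂ) * M *
        (hA.eigenvectorUnitary : Matrix (Fin n) (Fin n) ℂ)) j j) := by
  set U : Matrix (Fin n) (Fin n) ℂ := (hA.eigenvectorUnitary : Matrix (Fin n) (Fin n) ℂ)
    with hU
  have h : A * M
      = U * (Matrix.diagonal (RCLike.ofReal ∘ hA.eigenvalues)) * (star U * M) := by
    conv_lhs => rw [hA.spectral_theorem, Unitary.conjStarAlgAut_apply]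
    rw [← hU]
    simp only [Matrix.mul_assoc]
  rw [h, Matrix.trace_mul_cycle, Matrix.trace_mul_comm, trace_diag_mul]
  rfl

/-- For an `n × n` Hermitian matrix `A` and mutually orthogonal
projections `P 1, …, P r` summing to the identity, the eigenvalue vector of `A`
(in non-increasing order) majorizes that of `∑ i, P i * A * P i`.
Majorization is phrased via antitone rearrangements `sA`, `sB` of the two
eigenvalue vectors: every partial sum of `sA` dominates that of `sB`, with
equality for the total sum. -/
theorem pinching_majorization
    {n r : ℕ} {A : Matrix (Fin n) (Fin n) ℂ} (hA : A.IsHermitian)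
    (P : Fin r → Matrix (Fin n) (Fin n) ℂ)
    (hproj : ∀ i, (P i).IsHermitian ∧ P i * P i = P i)
    (horth : ∀ i j, i ≠ j → P i * P j = 0)
    (hsum : ∑ i, P i = 1)
    (hB : (∑ i, P i * A * P i).IsHermitian)
    (sA sB : Fin n → ℝ)
    (hsA : ∃ σ : Equiv.Perm (Fin n), sA = hA.eigenvalues ∘ σ)
    (hsB : ∃ σ : Equiv.Perm (Fin n), sB = hB.eigenvalues ∘ σ)
    (hsA' : Antitone sA) (hsB' : Antitone sB) :
    (∀ k : ℕ, ∑ i ∈ Finset.univ.filter (fun i : Fin n => (i : ℕ) < k), sB i ≤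
        ∑ i ∈ Finset.univ.filter (fun i : Fin n => (i : ℕ) < k), sA i) ∧
      ∑ i, sA i = ∑ i, sB i := by
  classical
  obtain ⟨σa, hσa⟩ := hsA
  obtain ⟨σb, hσb⟩ := hsB
  set B : Matrix (Fin n) (Fin n) ℂ := ∑ i, P i * A * P i with hBdef
  set U : Matrix (Fin n) (Fin n) ℂ := (hA.eigenvectorUnitary : Matrix (Fin n) (Fin n) ℂ)
    with hUdef
  set V : Matrix (Fin n) (Fin n) ℂ := (hB.eigenvectorUnitary : Matrix (Fin n) (Fin n) ℂ)
    with hVdef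
  have hUsU : star U * U = 1 := (Matrix.mem_unitaryGroup_iff').mp (hA.eigenvectorUnitary).2
  have hUUs : U * star U = 1 := (Matrix.mem_unitaryGroup_iff).mp (hA.eigenvectorUnitary).2
  have hVsV : star V * V = 1 := (Matrix.mem_unitaryGroup_iff').mp (hB.eigenvectorUnitary).2
  have hVVs : V * star V = 1 := (Matrix.mem_unitaryGroup_iff).mp (hB.eigenvectorUnitary).2
  set lA : Fin n → ℝ := hA.eigenvalues with hlA
  set lB : Fin n → ℝ := hB.eigenvalues with hlB
  -- trace of a hermitian matrix equals sum of eigenvalues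
  have htrA : A.trace = ∑ i, (lA i : ℂ) := by
    conv_lhs => rw [hA.spectral_theorem, Unitary.conjStarAlgAut_apply]
    rw [Matrix.trace_mul_cycle, hUsU, one_mul, Matrix.trace_diagonal]
    simp [hlA]
  have htrB : B.trace = ∑ i, (lB i : ℂ) := by
    conv_lhs => rw [hB.spectral_theorem, Unitary.conjStarAlgAut_apply]
    rw [Matrix.trace_mul_cycle, hVsV, one_mul, Matrix.trace_diagonal]
    simp [hlB]
  -- trace is preserved by pinching
  have htrBA : B.trace = A.trace := by
    rw [hBdef, Matrix.trace_sum]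
    calc ∑ i, ((P i * A * P i).trace)
        = ∑ i, ((P i * A).trace) := by
          refine Finset.sum_congr rfl fun i _ => ?_
          rw [Matrix.trace_mul_cycle, (hproj i).2]
      _ = ((∑ i, P i) * A).trace := by rw [Matrix.sum_mul, Matrix.trace_sum]
      _ = A.trace := by rw [hsum, one_mul]
  have hsumlAB : ∑ i, lA i = ∑ i, lB i := by
    have h : ((∑ i, lA i : ℝ) : ℂ) = ((∑ i, lB i : ℝ) : ℂ) := by
      push_cast
      rw [← htrA, ← htrB, htrBA]
    exact_mod_cast h
  have htotal : ∑ i, sA i = ∑ i, sB i := by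
    rw [hσa, hσb]
    simp only [Function.comp_apply]
    calc ∑ i, lA (σa i) = ∑ i, lA i := Equiv.sum_comp σa lA
      _ = ∑ i, lB i := hsumlAB
      _ = ∑ i, lB (σb i) := (Equiv.sum_comp σb lB).symm
  refine ⟨fun k => ?_, htotal⟩
  set m : ℕ := min k n with hmdef
  have hmn : m ≤ n := min_le_right k n
  have hfilter : (Finset.univ.filter (fun i : Fin n => (i : ℕ) < k))
      = Finset.univ.filter (fun i : Fin n => (i : ℕ) < m) := by
    ext i
    simp only [Finset.mem_filter, Finset.mem_univ, true_and, hmdef, lt_min_iff]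
    exact ⟨fun h => ⟨h, i.2⟩, fun h => h.1⟩
  set χ : Fin n → ℝ := fun j => if ((σb.symm j : Fin n) : ℕ) < k then 1 else 0 with hχ
  have hχ0 : ∀ j, 0 ≤ χ j := fun j => by rw [hχ]; dsimp only; split <;> norm_num
  have hχ1 : ∀ j, χ j ≤ 1 := fun j => by rw [hχ]; dsimp only; split <;> norm_num
  set Dχ : Matrix (Fin n) (Fin n) ℂ := Matrix.diagonal (fun j => (χ j : ℂ)) with hDχ
  set Q : Matrix (Fin n) (Fin n) ℂ := V * Dχ * star V with hQ
  have hDχps : Dχ.PosSemidef :=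
    Matrix.PosSemidef.diagonal (fun j => by simp only [Pi.zero_apply]; exact_mod_cast hχ0 j)
  have hQps : Q.PosSemidef := by
    rw [hQ, Matrix.star_eq_conjTranspose]
    exact hDχps.mul_mul_conjTranspose_same V
  have h1Qps : ((1 : Matrix (Fin n) (Fin n) ℂ) - Q).PosSemidef := by
    have h1 : (1 : Matrix (Fin n) (Fin n) ℂ) - Q = V * (1 - Dχ) * star V := by
      rw [Matrix.mul_sub, Matrix.sub_mul, mul_one, hVVs, hQ]
    have h2 : (1 : Matrix (Fin n) (Fin n) ℂ) - Dχ
        = Matrix.diagonal (fun j => ((1 - χ j : ℝ) : ℂ)) := by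
      rw [hDχ, ← Matrix.diagonal_one, Matrix.diagonal_sub]
      congr 1
      funext j
      push_cast
      rfl
    rw [h1, h2, Matrix.star_eq_conjTranspose]
    exact (Matrix.PosSemidef.diagonal (fun j => by
      have h3 := hχ1 j
      have h4 : (0:ℝ) ≤ 1 - χ j := by linarith
      simp only [Pi.zero_apply]
      exact_mod_cast h4)).mul_mul_conjTranspose_same V
  set M : Matrix (Fin n) (Fin n) ℂ := ∑ i, P i * Q * P i with hM
  have hMps : M.PosSemidef := sum_conj_psd P (fun i => (hproj i).1) hQps
  have h1M : (1 : Matrix (Fin n) (Fin n) ℂ) - M = ∑ i, P i * (1 - Q) * P i := by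
    have hterm : ∀ i : Fin r, P i * (1 - Q) * P i = P i * P i - P i * Q * P i := fun i => by
      rw [Matrix.mul_sub, mul_one, Matrix.sub_mul]
    have hPP : ∑ i, P i * P i = 1 := by
      rw [← hsum]; exact Finset.sum_congr rfl fun i _ => (hproj i).2
    simp_rw [hterm]
    rw [Finset.sum_sub_distrib, hPP, hM]
  have h1Mps : ((1 : Matrix (Fin n) (Fin n) ℂ) - M).PosSemidef := by
    rw [h1M]; exact sum_conj_psd P (fun i => (hproj i).1) h1Qps
  set N : Matrix (Fin n) (Fin n) ℂ := star U * M * U with hN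
  have hNps : N.PosSemidef := by
    rw [hN, Matrix.star_eq_conjTranspose]
    exact hMps.conjTranspose_mul_mul_same U
  have h1Nps : ((1 : Matrix (Fin n) (Fin n) ℂ) - N).PosSemidef := by
    have h1 : (1 : Matrix (Fin n) (Fin n) ℂ) - N = star U * (1 - M) * U := by
      rw [Matrix.mul_sub, Matrix.sub_mul, mul_one, hUsU, hN]
    rw [h1, Matrix.star_eq_conjTranspose]
    exact h1Mps.conjTranspose_mul_mul_same U
  set c : Fin n → ℝ := fun j => (N j j).re with hc
  have hdiagN : ∀ j, N j j = ((c j : ℝ) : ℂ) := fun j => by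
    rw [hc]; exact (hNps.isHermitian.coe_re_apply_self j).symm
  have hc0 : ∀ j, 0 ≤ c j := fun j => by
    have h := diag_entry_nonneg hNps j
    rw [hdiagN j] at h
    exact_mod_cast h
  have hc1 : ∀ j, c j ≤ 1 := fun j => by
    have h := diag_entry_nonneg h1Nps j
    have h2 : ((1 : Matrix (Fin n) (Fin n) ℂ) - N) j j = ((1 - c j : ℝ) : ℂ) := by
      rw [Matrix.sub_apply, Matrix.one_apply_eq, hdiagN j]
      push_cast
      ring
    rw [h2] at h
    have h3 : (0:ℝ) ≤ 1 - c j := by exact_mod_cast h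
    linarith
  -- the conjugated pinched projection is again Dχ
  have hVQV : star V * Q * V = Dχ := by
    rw [hQ]
    simp only [Matrix.mul_assoc]
    rw [hVsV, mul_one, ← Matrix.mul_assoc, hVsV, one_mul]
  -- trace identities
  have hTBQ : (B * Q).trace = ((∑ j, lB j * χ j : ℝ) : ℂ) := by
    rw [trace_herm_mul hB Q, ← hVdef, ← hlB, hVQV]
    push_cast
    refine Finset.sum_congr rfl fun j _ => ?_
    rw [hDχ, Matrix.diagonal_apply_eq]
  have hTAM : (A * M).trace = ((∑ j, lA j * c j : ℝ) : ℂ) := by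
    rw [trace_herm_mul hA M, ← hUdef, ← hlA, ← hN]
    push_cast
    refine Finset.sum_congr rfl fun j _ => ?_
    rw [hdiagN j]
  have hTBQeq : (B * Q).trace = (A * M).trace := by
    calc (B * Q).trace = ∑ i, ((P i * A * P i * Q).trace) := by
          rw [hBdef, Matrix.sum_mul, Matrix.trace_sum]
      _ = ∑ i, ((A * (P i * Q * P i)).trace) := by
          refine Finset.sum_congr rfl fun i _ => ?_
          rw [Matrix.mul_assoc (P i * A) (P i) Q, Matrix.trace_mul_comm (P i * A) (P i * Q),
            ← Matrix.mul_assoc (P i * Q) (P i) A, Matrix.trace_mul_comm (P i * Q * P i) A]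
      _ = (A * M).trace := by rw [hM, Finset.mul_sum, Matrix.trace_sum]
  -- sum of χ equals m
  have hχsum : ∑ j, χ j = (m : ℝ) := by
    rw [← Equiv.sum_comp σb χ]
    have : ∀ i : Fin n, χ (σb i) = if (i : ℕ) < k then (1:ℝ) else 0 := fun i => by
      rw [hχ]; simp [Equiv.symm_apply_apply]
    simp_rw [this]
    rw [Finset.sum_boole]
    rw [show (Finset.filter (fun i : Fin n => (i:ℕ) < k) Finset.univ) =
      (Finset.univ.filter (fun i : Fin n => (i : ℕ) < m)) from hfilter, card_filter_lt' hmn]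
  -- sum of c equals m
  have hcsum : ∑ j, c j = (m : ℝ) := by
    have htrN : N.trace = ((∑ j, c j : ℝ) : ℂ) := by
      rw [Matrix.trace]
      push_cast
      exact Finset.sum_congr rfl fun j _ => hdiagN j
    have htrNM : N.trace = M.trace := by
      rw [hN, Matrix.trace_mul_cycle, hUUs, one_mul]
    have htrMQ : M.trace = Q.trace := by
      rw [hM, Matrix.trace_sum]
      calc ∑ i, ((P i * Q * P i).trace)
          = ∑ i, ((P i * Q).trace) := by
            refine Finset.sum_congr rfl fun i _ => ?_
            rw [Matrix.trace_mul_cycle, (hproj i).2]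
        _ = ((∑ i, P i) * Q).trace := by rw [Matrix.sum_mul, Matrix.trace_sum]
        _ = Q.trace := by rw [hsum, one_mul]
    have htrQ : Q.trace = ((∑ j, χ j : ℝ) : ℂ) := by
      rw [hQ, Matrix.trace_mul_cycle, hVsV, one_mul, hDχ, Matrix.trace_diagonal]
      push_cast
      rfl
    have : ((∑ j, c j : ℝ) : ℂ) = ((m : ℝ) : ℂ) := by
      rw [← htrN, htrNM, htrMQ, htrQ, hχsum]
    exact_mod_cast this
  -- the main real identity
  have hreal : ∑ j, lB j * χ j = ∑ j, lA j * c j := by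
    have h : ((∑ j, lB j * χ j : ℝ) : ℂ) = ((∑ j, lA j * c j : ℝ) : ℂ) := by
      rw [← hTBQ, ← hTAM, hTBQeq]
    exact_mod_cast h
  calc ∑ i ∈ Finset.univ.filter (fun i : Fin n => (i : ℕ) < k), sB i
      = ∑ j, lB j * χ j := by
        rw [hσb, Finset.sum_filter, ← Equiv.sum_comp σb (fun j => lB j * χ j)]
        refine Finset.sum_congr rfl fun i _ => ?_
        rw [hχ]
        simp [Equiv.symm_apply_apply, mul_ite]
    _ = ∑ j, lA j * c j := hreal
    _ = ∑ i, sA i * c (σa i) := by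
        rw [hσa, ← Equiv.sum_comp σa (fun j => lA j * c j)]
        exact Finset.sum_congr rfl fun i _ => rfl
    _ ≤ ∑ i ∈ Finset.univ.filter (fun i : Fin n => (i : ℕ) < m), sA i := by
        refine thresh sA (fun i => c (σa i)) hsA' (fun i => hc0 _) (fun i => hc1 _) m hmn ?_
        rw [Equiv.sum_comp σa c]
        exact hcsum
    _ = ∑ i ∈ Finset.univ.filter (fun i : Fin n => (i : ℕ) < k), sA i := by rw [hfilter]
end

section
/- For any two orthogonal projectors Π and Δ on a finite-dimensional complex inner product space V, there exists an orthogonal decomposition of V into one-dimensional and two-dimensional subspaces each of which is invariant under both Π and Δ; moreover, on each two-dimensional subspace in the decomposition, both Π and Δ restrict to rank-one projectors. -/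
open scoped InnerProductSpace
open Module Submodule

section aux

variable {V : Type*} [NormedAddCommGroup V] [InnerProductSpace ℂ V]

lemma idem_fix {p : V →ₗ[ℂ] V} (hp : p ∘ₗ p = p) {x : V} (hx : x ∈ LinearMap.range p) :
    p x = x := by
  obtain ⟨u, rfl⟩ := hx
  have := congrArg (fun f => f u) hp
  simpa using this

lemma finrank_span_singleton_le (x : V) : finrank ℂ (span ℂ {x} : Submodule ℂ V) ≤ 1 := by
  rcases eq_or_ne x 0 with rfl | hx
  · rw [Submodule.span_zero_singleton]; simp
  · simp [finrank_span_singleton hx]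

/-- Existence of one invariant piece of dimension 1 or 2. -/
lemma exists_piece [FiniteDimensional ℂ V] [Nontrivial V]
    (p d : V →ₗ[ℂ] V) (hp_idem : p ∘ₗ p = p) (hd_idem : d ∘ₗ d = d) :
    ∃ W : Submodule ℂ V, W ≠ ⊥ ∧
      (finrank ℂ W = 1 ∨ finrank ℂ W = 2) ∧
      (∀ x ∈ W, p x ∈ W) ∧ (∀ x ∈ W, d x ∈ W) ∧
      (finrank ℂ W = 2 → finrank ℂ (W.map p) = 1 ∧ finrank ℂ (W.map d) = 1) := by
  by_cases hp0 : p = 0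
  · by_cases hd0 : d = 0
    · obtain ⟨v, hv⟩ := exists_ne (0 : V)
      refine ⟨span ℂ {v}, ?_, Or.inl (finrank_span_singleton hv), ?_, ?_, ?_⟩
      · simpa using hv
      · intro x _; simp [hp0]
      · intro x _; simp [hd0]
      · intro h; rw [finrank_span_singleton hv] at h; omega
    · have : ∃ u, d u ≠ 0 := by
        by_contra h; push_neg at h
        exact hd0 (LinearMap.ext fun u => by simpa using h u)
      obtain ⟨u, hu⟩ := this
      set v := d u with hv
      have hdv : d v = v := idem_fix hd_idem ⟨u, rfl⟩
      refine ⟨span ℂ {v}, ?_, Or.inl (finrank_span_singleton hu), ?_, ?_, ?_⟩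
      · simpa using hu
      · intro x _; simp [hp0]
      · intro x hx
        rw [mem_span_singleton] at hx
        obtain ⟨c, rfl⟩ := hx
        rw [map_smul, hdv]
        exact smul_mem _ _ (mem_span_singleton_self v)
      · intro h; rw [finrank_span_singleton hu] at h; omega
  · -- p ≠ 0 : use an eigenvector of (p ∘ d) restricted to range p
    have hrange : LinearMap.range p ≠ ⊥ := by
      intro h; exact hp0 (LinearMap.range_eq_bot.mp h)
    have : Nontrivial (LinearMap.range p) := Submodule.nontrivial_iff_ne_bot.mpr hrange
    have hmem : ∀ x ∈ LinearMap.range p, (p ∘ₗ d) x ∈ LinearMap.range p := by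
      intro x _; exact ⟨d x, rfl⟩
    set T : Module.End ℂ (LinearMap.range p) := (p ∘ₗ d).restrict hmem with hT
    obtain ⟨c, hc⟩ := Module.End.exists_eigenvalue T
    obtain ⟨w, hw⟩ := hc.exists_hasEigenvector
    set v : V := (w : V) with hvdef
    have hv0 : v ≠ 0 := fun h => hw.right (by exact_mod_cast Subtype.ext h)
    have hpv : p v = v := idem_fix hp_idem w.2
    have hpdv : p (d v) = c • v := by
      have := hw.apply_eq_smul
      have h2 := congrArg (Subtype.val) this
      rw [hT, LinearMap.restrict_apply] at h2
      simpa using h2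
    set W : Submodule ℂ V := span ℂ {v, d v} with hW
    have hvW : v ∈ W := subset_span (by simp)
    have hdvW : d v ∈ W := subset_span (by simp)
    have hpinv : ∀ x ∈ W, p x ∈ W := by
      intro x hx
      induction hx using Submodule.span_induction with
      | mem y hy =>
          rcases hy with rfl | rfl
          · rw [hpv]; exact hvW
          · rw [hpdv]; exact smul_mem _ _ hvW
      | zero => simp
      | add a b _ _ ha hb => rw [map_add]; exact add_mem ha hb
      | smul c x _ hx => rw [map_smul]; exact smul_mem _ _ hx
    have hdinv : ∀ x ∈ W, d x ∈ W := by
      intro x hx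
      induction hx using Submodule.span_induction with
      | mem y hy =>
          rcases hy with rfl | rfl
          · exact hdvW
          · rw [idem_fix hd_idem ⟨v, rfl⟩]; exact hdvW
      | zero => simp
      | add a b _ _ ha hb => rw [map_add]; exact add_mem ha hb
      | smul c x _ hx => rw [map_smul]; exact smul_mem _ _ hx
    have hWle : W ≤ span ℂ {v} ⊔ span ℂ {d v} := by
      rw [hW, Set.insert_eq, span_union]
    have hfin_le : finrank ℂ W ≤ 2 := by
      refine le_trans (Submodule.finrank_mono hWle) ?_
      have := Submodule.finrank_sup_add_finrank_inf_eq (span ℂ {v}) (span ℂ {d v})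
      have h1 := finrank_span_singleton_le v
      have h2 := finrank_span_singleton_le (d v)
      omega
    have hfin_ge : 1 ≤ finrank ℂ W := by
      have : span ℂ {v} ≤ W := span_mono (by simp)
      have := Submodule.finrank_mono this
      rw [finrank_span_singleton hv0] at this
      exact this
    refine ⟨W, ?_, by omega, hpinv, hdinv, ?_⟩
    · intro h; rw [h] at hvW; simp at hvW; exact hv0 hvW
    · intro h2
      have hdv0 : d v ≠ 0 := by
        intro h
        have : W ≤ span ℂ {v} := by
          rw [hW]; apply span_le.mpr
          rintro x (rfl | rfl)
          · exact mem_span_singleton_self v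
          · rw [h]; exact zero_mem _
        have := Submodule.finrank_mono this
        rw [finrank_span_singleton hv0] at this
        omega
      constructor
      · have : W.map p = span ℂ {v} := by
          rw [hW, Submodule.map_span]
          apply le_antisymm
          · apply span_le.mpr
            rintro x ⟨y, (rfl | rfl), rfl⟩
            · rw [hpv]; exact mem_span_singleton_self v
            · rw [hpdv]; exact smul_mem _ _ (mem_span_singleton_self v)
          · apply span_le.mpr
            rintro x rfl
            exact subset_span ⟨v, by simp, hpv⟩
        rw [this, finrank_span_singleton hv0]
      · have : W.map d = span ℂ {d v} := by
          rw [hW, Submodule.map_span]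
          apply le_antisymm
          · apply span_le.mpr
            rintro x ⟨y, (rfl | rfl), rfl⟩
            · exact mem_span_singleton_self (d v)
            · rw [idem_fix hd_idem ⟨v, rfl⟩]; exact mem_span_singleton_self (d v)
          · apply span_le.mpr
            rintro x rfl
            exact subset_span ⟨v, by simp, rfl⟩
        rw [this, finrank_span_singleton hdv0]

end aux

universe u

lemma jordan_aux : ∀ (n : ℕ) (V : Type u) [NormedAddCommGroup V]
    [InnerProductSpace ℂ V] [FiniteDimensional ℂ V],
    finrank ℂ V ≤ n → ∀ (p d : V →ₗ[ℂ] V),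
    p ∘ₗ p = p → LinearMap.IsSymmetric p →
    d ∘ₗ d = d → LinearMap.IsSymmetric d →
    ∃ (k : ℕ) (W : Fin k → Submodule ℂ V),
      (∀ i j, i ≠ j → ∀ x ∈ W i, ∀ y ∈ W j, ⟪x, y⟫_ℂ = 0) ∧
      (⨆ i, W i) = ⊤ ∧
      (∀ i, finrank ℂ (W i) = 1 ∨ finrank ℂ (W i) = 2) ∧
      (∀ i, ∀ x ∈ W i, p x ∈ W i) ∧
      (∀ i, ∀ x ∈ W i, d x ∈ W i) ∧
      (∀ i, finrank ℂ (W i) = 2 →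
        finrank ℂ ((W i).map p) = 1 ∧ finrank ℂ ((W i).map d) = 1) := by
  intro n
  induction n with
  | zero =>
    intro V _ _ _ hn p d _ _ _ _
    have : finrank ℂ V = 0 := Nat.le_zero.mp hn
    have hsub : Subsingleton V := (finrank_zero_iff (R := ℂ)).mp this
    refine ⟨0, Fin.elim0, fun i => i.elim0, ?_, fun i => i.elim0,
      fun i => i.elim0, fun i => i.elim0, fun i => i.elim0⟩
    rw [iSup_of_empty]
    exact Subsingleton.elim _ _
  | succ n ih =>
    intro V _ _ _ hn p d hp_idem hp_sym hd_idem hd_sym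
    by_cases htriv : finrank ℂ V = 0
    · have hsub : Subsingleton V := (finrank_zero_iff (R := ℂ)).mp htriv
      refine ⟨0, Fin.elim0, fun i => i.elim0, ?_, fun i => i.elim0,
        fun i => i.elim0, fun i => i.elim0, fun i => i.elim0⟩
      rw [iSup_of_empty]
      exact Subsingleton.elim _ _
    · have : Nontrivial V := by
        rcases subsingleton_or_nontrivial V with h | h
        · exact absurd (finrank_zero_iff (R := ℂ)).mpr (by intro h2; exact htriv (h2 h))
        · exact h
      obtain ⟨W, hWbot, hWdim, hWp, hWd, hWrank⟩ := exists_piece p d hp_idem hd_idem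
      have hpK : ∀ x ∈ Wᗮ, p x ∈ Wᗮ := by
        intro x hx
        rw [Submodule.mem_orthogonal]
        intro u hu
        rw [← hp_sym u x]
        exact hx (p u) (hWp u hu)
      have hdK : ∀ x ∈ Wᗮ, d x ∈ Wᗮ := by
        intro x hx
        rw [Submodule.mem_orthogonal]
        intro u hu
        rw [← hd_sym u x]
        exact hx (d u) (hWd u hu)
      set p' : Wᗮ →ₗ[ℂ] Wᗮ := p.restrict hpK with hp'
      set d' : Wᗮ →ₗ[ℂ] Wᗮ := d.restrict hdK with hd'
      have hp'coe : ∀ x : Wᗮ, (p' x : V) = p x := fun x => rfl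
      have hd'coe : ∀ x : Wᗮ, (d' x : V) = d x := fun x => rfl
      have hp'_idem : p' ∘ₗ p' = p' := by
        ext x
        show p (p x) = p x
        exact idem_fix hp_idem ⟨x, rfl⟩
      have hd'_idem : d' ∘ₗ d' = d' := by
        ext x
        show d (d x) = d x
        exact idem_fix hd_idem ⟨x, rfl⟩
      have hp'_sym : LinearMap.IsSymmetric p' := hp_sym.restrict_invariant hpK
      have hd'_sym : LinearMap.IsSymmetric d' := hd_sym.restrict_invariant hdK
      have hWpos : 1 ≤ finrank ℂ W := by
        rcases hWdim with h | h <;> omega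
      have hdimK : finrank ℂ Wᗮ ≤ n := by
        have := Submodule.finrank_add_finrank_orthogonal (K := W)
        omega
      obtain ⟨k, U, hUorth, hUsup, hUdim, hUp, hUd, hUrank⟩ :=
        ih Wᗮ hdimK p' d' hp'_idem hp'_sym hd'_idem hd'_sym
      have hmemK : ∀ i, ∀ x ∈ (U i).map Wᗮ.subtype, x ∈ Wᗮ :=
        fun i x hx => Submodule.map_subtype_le Wᗮ (U i) hx
      refine ⟨k + 1, Fin.cons W (fun i => (U i).map Wᗮ.subtype), ?_, ?_, ?_, ?_, ?_, ?_⟩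
      · -- orthogonality
        intro i j
        induction i using Fin.cases with
        | zero =>
          induction j using Fin.cases with
          | zero => intro h; exact absurd rfl h
          | succ j' =>
            intro _ x hx y hy
            rw [Fin.cons_zero] at hx
            rw [Fin.cons_succ] at hy
            exact hmemK j' y hy x hx
        | succ i' =>
          induction j using Fin.cases with
          | zero =>
            intro _ x hx y hy
            rw [Fin.cons_succ] at hx
            rw [Fin.cons_zero] at hy
            exact (Submodule.mem_orthogonal' W x).mp (hmemK i' x hx) y hy
          | succ j' =>
            intro hij x hx y hy
            rw [Fin.cons_succ] at hx hy
            obtain ⟨a, ha, rfl⟩ := hx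
            obtain ⟨b, hb, rfl⟩ := hy
            have hij' : i' ≠ j' := fun h => hij (by rw [h])
            have := hUorth i' j' hij' a ha b hb
            rwa [Submodule.coe_inner] at this
      · -- sup = top
        apply le_antisymm le_top
        have hcompl : W ⊔ Wᗮ = ⊤ :=
          (Submodule.isCompl_orthogonal (K := W)).sup_eq_top
        rw [← hcompl]
        apply sup_le
        · have := le_iSup (Fin.cons W (fun i => (U i).map Wᗮ.subtype)) 0
          rwa [Fin.cons_zero] at this
        · have h3 : (⨆ i, Submodule.map Wᗮ.subtype (U i)) = Wᗮ := by
            rw [← Submodule.map_iSup, hUsup, Submodule.map_subtype_top]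
          refine le_trans (le_of_eq h3.symm) (iSup_le fun i => ?_)
          have := le_iSup (Fin.cons W (fun i => (U i).map Wᗮ.subtype)) i.succ
          rwa [Fin.cons_succ] at this
      · -- dims
        intro i
        induction i using Fin.cases with
        | zero => rw [Fin.cons_zero]; exact hWdim
        | succ i' =>
          rw [Fin.cons_succ, Submodule.finrank_map_subtype_eq]
          exact hUdim i'
      · -- p invariance
        intro i
        induction i using Fin.cases with
        | zero => rw [Fin.cons_zero]; exact hWp
        | succ i' =>
          rw [Fin.cons_succ]
          intro x hx
          obtain ⟨a, ha, rfl⟩ := hx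
          exact ⟨p' a, hUp i' a ha, (hp'coe a)⟩
      · -- d invariance
        intro i
        induction i using Fin.cases with
        | zero => rw [Fin.cons_zero]; exact hWd
        | succ i' =>
          rw [Fin.cons_succ]
          intro x hx
          obtain ⟨a, ha, rfl⟩ := hx
          exact ⟨d' a, hUd i' a ha, (hd'coe a)⟩
      · -- rank one
        intro i
        induction i using Fin.cases with
        | zero => rw [Fin.cons_zero]; exact hWrank
        | succ i' =>
          rw [Fin.cons_succ, Submodule.finrank_map_subtype_eq]
          intro hdim2
          have hpcomm : p ∘ₗ Wᗮ.subtype = Wᗮ.subtype ∘ₗ p' := by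
            ext a; exact (hp'coe a).symm
          have hdcomm : d ∘ₗ Wᗮ.subtype = Wᗮ.subtype ∘ₗ d' := by
            ext a; exact (hd'coe a).symm
          have h1 : ((U i').map Wᗮ.subtype).map p = ((U i').map p').map Wᗮ.subtype := by
            rw [← Submodule.map_comp, ← Submodule.map_comp, hpcomm]
          have h2 : ((U i').map Wᗮ.subtype).map d = ((U i').map d').map Wᗮ.subtype := by
            rw [← Submodule.map_comp, ← Submodule.map_comp, hdcomm]
          rw [h1, h2, Submodule.finrank_map_subtype_eq, Submodule.finrank_map_subtype_eq]
          exact hUrank i' hdim2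

/-- **Jordan's lemma on two projections.** For any two orthogonal
projectors `Π` and `Δ` (symmetric idempotent linear maps) on a finite-dimensional
complex inner product space `V`, there is an orthogonal decomposition of `V`
into one- and two-dimensional subspaces, each invariant under both `Π` and `Δ`;
moreover, on each two-dimensional subspace of the decomposition, both `Π` and
`Δ` restrict to rank-one projectors. -/
theorem jordan_two_projections
    {V : Type*} [NormedAddCommGroup V] [InnerProductSpace ℂ V]
    [FiniteDimensional ℂ V]
    (p d : V →ₗ[ℂ] V)
    (hp_idem : p ∘ₗ p = p) (hp_sym : LinearMap.IsSymmetric p)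
    (hd_idem : d ∘ₗ d = d) (hd_sym : LinearMap.IsSymmetric d) :
    ∃ (k : ℕ) (W : Fin k → Submodule ℂ V),
      (∀ i j, i ≠ j → ∀ x ∈ W i, ∀ y ∈ W j, ⟪x, y⟫_ℂ = 0) ∧
      (⨆ i, W i) = ⊤ ∧
      (∀ i, Module.finrank ℂ (W i) = 1 ∨ Module.finrank ℂ (W i) = 2) ∧
      (∀ i, ∀ x ∈ W i, p x ∈ W i) ∧
      (∀ i, ∀ x ∈ W i, d x ∈ W i) ∧
      (∀ i, Module.finrank ℂ (W i) = 2 →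
        Module.finrank ℂ (Submodule.map p (W i)) = 1 ∧
        Module.finrank ℂ (Submodule.map d (W i)) = 1) :=
  jordan_aux (finrank ℂ V) V le_rfl p d hp_idem hp_sym hd_idem hd_sym
end

section
/- Let P and Q be 2×2 positive semidefinite matrices with ‖Q‖ ≥ 1, ‖P+Q‖ ≤ 1+ε₁, λ₂(P+Q) < 1, tr(Π^{P+Q}P) ≥ ε²·tr(Π^{P+Q}(P+Q)), and tr(Π^Q Q) ≥ (1-ε₁⁸)·tr(Π^{P+Q}(P+Q)), where ε₁ = 3ε/ln n ≤ ε and ε is sufficiently small. Then λ₂(P+Q) > 1 - ε₁³/9. -/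
open scoped ComplexOrder

/-- The `ℓ²`-operator norm of a complex square matrix. -/
noncomputable def opNorm {n : ℕ} (M : Matrix (Fin n) (Fin n) ℂ) : ℝ :=
  ‖Matrix.toEuclideanCLM (𝕜 := ℂ) M‖

/-- The spectral projection of a Hermitian matrix onto the span of its
eigenvectors with eigenvalue at least `1`. -/
noncomputable def specProj {n : ℕ} {M : Matrix (Fin n) (Fin n) ℂ}
    (hM : M.IsHermitian) : Matrix (Fin n) (Fin n) ℂ :=
  ∑ i ∈ Finset.univ.filter (fun i => 1 ≤ hM.eigenvalues i),
    Matrix.vecMulVec (hM.eigenvectorBasis i) (star (hM.eigenvectorBasis i))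

/-- The smaller eigenvalue `λ₂` of a `2 × 2` Hermitian matrix. -/
noncomputable def lambda2 {M : Matrix (Fin 2) (Fin 2) ℂ} (hM : M.IsHermitian) : ℝ :=
  min (hM.eigenvalues 0) (hM.eigenvalues 1)

open Matrix ComplexConjugate
open scoped Matrix.Norms.L2Operator ComplexInnerProductSpace
set_option maxHeartbeats 1000000

lemma opNorm_eq_norm {n : ℕ} (M : Matrix (Fin n) (Fin n) ℂ) : opNorm M = ‖M‖ := rfl

local notation "E" => EuclideanSpace ℂ (Fin 2)

-- trace of rank-one times N
lemma trace_vecMulVec_mul (v : Fin 2 → ℂ) (N : Matrix (Fin 2) (Fin 2) ℂ) :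
    (vecMulVec v (star v) * N).trace = star v ⬝ᵥ (N *ᵥ v) := by
  simp [Matrix.trace, Matrix.mul_apply, vecMulVec, Matrix.mulVec, dotProduct,
    Matrix.diag, Finset.mul_sum, Finset.sum_mul]
  ring

-- orthonormality at the dotProduct level
example {M : Matrix (Fin 2) (Fin 2) ℂ} (hM : M.IsHermitian) (i j : Fin 2) :
    star ⇑(hM.eigenvectorBasis i) ⬝ᵥ ⇑(hM.eigenvectorBasis j) = if i = j then 1 else 0 := by
  have := orthonormal_iff_ite.mp hM.eigenvectorBasis.orthonormal i j
  rw [dotProduct_comm]; exact this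

-- eigen dot lemma
lemma dot_mulVec_eigen {M : Matrix (Fin 2) (Fin 2) ℂ} (hM : M.IsHermitian) (i : Fin 2)
    (x : Fin 2 → ℂ) :
    star ⇑(hM.eigenvectorBasis i) ⬝ᵥ (M *ᵥ x)
      = (hM.eigenvalues i : ℂ) * (star ⇑(hM.eigenvectorBasis i) ⬝ᵥ x) := by
  rw [Matrix.dotProduct_mulVec]
  have h1 : star ⇑(hM.eigenvectorBasis i) ᵥ* M = star (Mᴴ *ᵥ ⇑(hM.eigenvectorBasis i)) := by
    rw [Matrix.star_mulVec, conjTranspose_conjTranspose]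
  rw [h1, hM.eq, hM.mulVec_eigenvectorBasis]
  simp [smul_dotProduct, star_smul, dotProduct, Fin.sum_univ_two]
  ring

lemma inner_sum_repr (b : OrthonormalBasis (Fin 2) ℂ E) (x y : E) :
    ⟪x, y⟫ = ∑ i, conj ⟪b i, x⟫ * ⟪b i, y⟫ := by
  rw [← b.repr.inner_map_map x y, PiLp.inner_apply]
  apply Finset.sum_congr rfl
  intro i _
  rw [RCLike.inner_apply, b.repr_apply_apply, b.repr_apply_apply]
  ring

lemma norm_sq_expansion (b : OrthonormalBasis (Fin 2) ℂ E) (x : E) :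
    ‖x‖ ^ 2 = ∑ i, ‖⟪b i, x⟫‖ ^ 2 := by
  have h := inner_sum_repr b x x
  rw [inner_self_eq_norm_sq_to_K] at h
  have h2 : ∀ i ∈ (Finset.univ : Finset (Fin 2)), conj ⟪b i, x⟫ * ⟪b i, x⟫
      = ((‖⟪b i, x⟫‖ ^ 2 : ℝ) : ℂ) := by
    intro i _; rw [RCLike.conj_mul]; norm_cast
  rw [Finset.sum_congr rfl h2] at h
  have h3 : ((‖x‖ ^ 2 : ℝ) : ℂ) = ((∑ i, ‖⟪b i, x⟫‖ ^ 2 : ℝ) : ℂ) := by push_cast; push_cast at h; exact h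
  exact Complex.ofReal_injective h3

lemma quad_expansion {M : Matrix (Fin 2) (Fin 2) ℂ} (hM : M.IsHermitian) (x : E) :
    star ⇑x ⬝ᵥ (M *ᵥ ⇑x)
      = ∑ i, (hM.eigenvalues i : ℂ) * ((‖⟪hM.eigenvectorBasis i, x⟫‖ ^ 2 : ℝ) : ℂ) := by
  set y : E := (WithLp.equiv 2 _).symm (M *ᵥ ⇑x) with hy
  have hcy : ⇑y = M *ᵥ ⇑x := rfl
  have h1 : star ⇑x ⬝ᵥ (M *ᵥ ⇑x) = ⟪x, y⟫ := by
    rw [EuclideanSpace.inner_eq_star_dotProduct, dotProduct_comm]; rfl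
  rw [h1, inner_sum_repr hM.eigenvectorBasis x y]
  apply Finset.sum_congr rfl
  intro i _
  have h2 : ⟪hM.eigenvectorBasis i, y⟫
      = (hM.eigenvalues i : ℂ) * ⟪hM.eigenvectorBasis i, x⟫ := by
    rw [EuclideanSpace.inner_eq_star_dotProduct, EuclideanSpace.inner_eq_star_dotProduct]
    rw [dotProduct_comm _ (star _), dotProduct_comm _ (star _)]
    exact dot_mulVec_eigen hM i x
  rw [h2]
  have h3 : ((‖⟪hM.eigenvectorBasis i, x⟫‖ ^ 2 : ℝ) : ℂ)
      = conj ⟪hM.eigenvectorBasis i, x⟫ * ⟪hM.eigenvectorBasis i, x⟫ := by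
    rw [RCLike.conj_mul]; norm_cast
  rw [h3]; ring

lemma basis_dot {M : Matrix (Fin 2) (Fin 2) ℂ} (hM : M.IsHermitian) (i j : Fin 2) :
    star ⇑(hM.eigenvectorBasis i) ⬝ᵥ ⇑(hM.eigenvectorBasis j) = if i = j then 1 else 0 :=
  by rw [dotProduct_comm]; exact orthonormal_iff_ite.mp hM.eigenvectorBasis.orthonormal i j

lemma qf_eigen_self {M : Matrix (Fin 2) (Fin 2) ℂ} (hM : M.IsHermitian) (i : Fin 2) :
    star ⇑(hM.eigenvectorBasis i) ⬝ᵥ (M *ᵥ ⇑(hM.eigenvectorBasis i)) = (hM.eigenvalues i : ℂ) := by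
  rw [dot_mulVec_eigen hM i, basis_dot hM i i]
  simp

lemma quad_re_expansion {M : Matrix (Fin 2) (Fin 2) ℂ} (hM : M.IsHermitian) (x : E) :
    (star ⇑x ⬝ᵥ (M *ᵥ ⇑x)).re
      = ∑ i, hM.eigenvalues i * ‖⟪hM.eigenvectorBasis i, x⟫‖ ^ 2 := by
  rw [quad_expansion hM x]
  rw [Fin.sum_univ_two, Fin.sum_univ_two]
  simp [Complex.add_re, Complex.mul_re, ← Complex.ofReal_pow]

-- norm squared of M *ᵥ x
lemma mulVec_norm_sq {M : Matrix (Fin 2) (Fin 2) ℂ} (hM : M.IsHermitian) (x : E) :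
    ‖((WithLp.equiv 2 (Fin 2 → ℂ)).symm (M *ᵥ ⇑x) : E)‖ ^ 2
      = ∑ i, hM.eigenvalues i ^ 2 * ‖⟪hM.eigenvectorBasis i, x⟫‖ ^ 2 := by
  rw [norm_sq_expansion hM.eigenvectorBasis]
  apply Finset.sum_congr rfl
  intro i _
  have h2 : ⟪hM.eigenvectorBasis i, ((WithLp.equiv 2 (Fin 2 → ℂ)).symm (M *ᵥ ⇑x) : E)⟫
      = (hM.eigenvalues i : ℂ) * ⟪hM.eigenvectorBasis i, x⟫ := by
    rw [EuclideanSpace.inner_eq_star_dotProduct, EuclideanSpace.inner_eq_star_dotProduct]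
    rw [dotProduct_comm _ (star _), dotProduct_comm _ (star _)]
    exact dot_mulVec_eigen hM i x
  rw [h2, norm_mul]
  rw [Complex.norm_real]
  rw [Real.norm_eq_abs, mul_pow, sq_abs]

lemma quad_re_le_opNorm (M : Matrix (Fin 2) (Fin 2) ℂ) (x : E) :
    (star ⇑x ⬝ᵥ (M *ᵥ ⇑x)).re ≤ opNorm M * ‖x‖ ^ 2 := by
  set y : E := (WithLp.equiv 2 (Fin 2 → ℂ)).symm (M *ᵥ ⇑x) with hy
  have h1 : star ⇑x ⬝ᵥ (M *ᵥ ⇑x) = ⟪x, y⟫ := by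
    rw [EuclideanSpace.inner_eq_star_dotProduct, dotProduct_comm]; rfl
  have h2 : ⟪x, y⟫.re ≤ ‖⟪x, y⟫‖ := Complex.re_le_norm _
  have h3 : ‖⟪x, y⟫‖ ≤ ‖x‖ * ‖y‖ := norm_inner_le_norm x y
  have h4 : ‖y‖ ≤ opNorm M * ‖x‖ := by
    rw [opNorm_eq_norm]
    exact M.l2_opNorm_mulVec x
  rw [h1]
  calc ⟪x, y⟫.re ≤ ‖x‖ * ‖y‖ := le_trans h2 h3
    _ ≤ ‖x‖ * (opNorm M * ‖x‖) := by
        apply mul_le_mul_of_nonneg_left h4 (norm_nonneg _)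
    _ = opNorm M * ‖x‖ ^ 2 := by ring

lemma opNorm_le_of_eig {M : Matrix (Fin 2) (Fin 2) ℂ} (hM : M.IsHermitian) {m : ℝ}
    (hm : 0 ≤ m) (hb : ∀ i, |hM.eigenvalues i| ≤ m) : opNorm M ≤ m := by
  unfold opNorm
  apply ContinuousLinearMap.opNorm_le_bound _ hm
  intro x
  have hx : Matrix.toEuclideanCLM (𝕜 := ℂ) M x = ((WithLp.equiv 2 (Fin 2 → ℂ)).symm (M *ᵥ ⇑x) : E) := by
    apply (WithLp.equiv 2 (Fin 2 → ℂ)).injective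
    simpa using piLp_equiv_toEuclideanCLM M x
  rw [hx]
  have h1 := mulVec_norm_sq hM x
  have h2 : ∑ i, hM.eigenvalues i ^ 2 * ‖⟪hM.eigenvectorBasis i, x⟫‖ ^ 2
      ≤ m ^ 2 * ‖x‖ ^ 2 := by
    rw [norm_sq_expansion hM.eigenvectorBasis x, Finset.mul_sum]
    apply Finset.sum_le_sum
    intro i _
    have : hM.eigenvalues i ^ 2 ≤ m ^ 2 := by
      have := hb i; nlinarith [abs_nonneg (hM.eigenvalues i), le_abs_self (hM.eigenvalues i),
        neg_abs_le (hM.eigenvalues i)]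
    exact mul_le_mul_of_nonneg_right this (by positivity)
  nlinarith [norm_nonneg ((WithLp.equiv 2 (Fin 2 → ℂ)).symm (M *ᵥ ⇑x) : E), norm_nonneg x,
    mul_nonneg hm (norm_nonneg x)]

lemma trace_specProj {M : Matrix (Fin 2) (Fin 2) ℂ} (hM : M.IsHermitian)
    (N : Matrix (Fin 2) (Fin 2) ℂ) :
    (specProj hM * N).trace
      = ∑ i ∈ Finset.univ.filter (fun i => 1 ≤ hM.eigenvalues i),
          star ⇑(hM.eigenvectorBasis i) ⬝ᵥ (N *ᵥ ⇑(hM.eigenvectorBasis i)) := by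
  unfold specProj
  rw [Finset.sum_mul, Matrix.trace_sum]
  exact Finset.sum_congr rfl fun i _ => trace_vecMulVec_mul _ _

lemma qf_add (P Q : Matrix (Fin 2) (Fin 2) ℂ) (x : Fin 2 → ℂ) :
    star x ⬝ᵥ ((P + Q) *ᵥ x) = star x ⬝ᵥ (P *ᵥ x) + star x ⬝ᵥ (Q *ᵥ x) := by
  rw [Matrix.add_mulVec, dotProduct_add]

lemma qf_par (P : Matrix (Fin 2) (Fin 2) ℂ) (x y : Fin 2 → ℂ) :
    star (x - y) ⬝ᵥ (P *ᵥ (x - y)) + star (x + y) ⬝ᵥ (P *ᵥ (x + y))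
      = 2 * (star x ⬝ᵥ (P *ᵥ x)) + 2 * (star y ⬝ᵥ (P *ᵥ y)) := by
  simp [dotProduct, Matrix.mulVec, Fin.sum_univ_two, Pi.add_apply, Pi.sub_apply, map_add,
    map_sub]
  ring

lemma qf_smul (P : Matrix (Fin 2) (Fin 2) ℂ) (α : ℂ) (x : Fin 2 → ℂ) :
    star (α • x) ⬝ᵥ (P *ᵥ (α • x)) = ((‖α‖ ^ 2 : ℝ) : ℂ) * (star x ⬝ᵥ (P *ᵥ x)) := by
  have : ((‖α‖ ^ 2 : ℝ) : ℂ) = conj α * α := by rw [RCLike.conj_mul]; norm_cast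
  rw [this]
  simp [dotProduct, Matrix.mulVec, Fin.sum_univ_two, Pi.smul_apply, smul_eq_mul]
  ring

lemma sum_fin2 {β : Type*} [AddCommMonoid β] (f : Fin 2 → β) {i j : Fin 2} (h : i ≠ j) :
    ∑ k, f k = f i + f j := by
  fin_cases i <;> fin_cases j <;> simp_all [Fin.sum_univ_two] <;> exact add_comm _ _

lemma filter_eq_singleton {p : Fin 2 → Prop} [DecidablePred p] {i j : Fin 2} (h : i ≠ j)
    (hi : p i) (hj : ¬ p j) : Finset.univ.filter p = {i} := by
  ext k
  have hk : k = i ∨ k = j := by fin_cases i <;> fin_cases j <;> fin_cases k <;> simp_all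
  rcases hk with rfl | rfl <;> simp [hi, hj, h, Ne.symm h]

lemma quad_re_le_max {M : Matrix (Fin 2) (Fin 2) ℂ} (hM : M.IsHermitian) (x : E) :
    (star ⇑x ⬝ᵥ (M *ᵥ ⇑x)).re ≤ max (hM.eigenvalues 0) (hM.eigenvalues 1) * ‖x‖ ^ 2 := by
  rw [quad_re_expansion hM x, norm_sq_expansion hM.eigenvectorBasis x,
    Fin.sum_univ_two, Fin.sum_univ_two, mul_add]
  have h0 := le_max_left (hM.eigenvalues 0) (hM.eigenvalues 1)
  have h1 := le_max_right (hM.eigenvalues 0) (hM.eigenvalues 1)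
  have n0 : (0:ℝ) ≤ ‖⟪hM.eigenvectorBasis 0, x⟫‖ ^ 2 := by positivity
  have n1 : (0:ℝ) ≤ ‖⟪hM.eigenvectorBasis 1, x⟫‖ ^ 2 := by positivity
  nlinarith

lemma quad_re_ge_min {M : Matrix (Fin 2) (Fin 2) ℂ} (hM : M.IsHermitian) (x : E) :
    min (hM.eigenvalues 0) (hM.eigenvalues 1) * ‖x‖ ^ 2 ≤ (star ⇑x ⬝ᵥ (M *ᵥ ⇑x)).re := by
  rw [quad_re_expansion hM x, norm_sq_expansion hM.eigenvectorBasis x,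
    Fin.sum_univ_two, Fin.sum_univ_two, mul_add]
  have h0 := min_le_left (hM.eigenvalues 0) (hM.eigenvalues 1)
  have h1 := min_le_right (hM.eigenvalues 0) (hM.eigenvalues 1)
  have n0 : (0:ℝ) ≤ ‖⟪hM.eigenvectorBasis 0, x⟫‖ ^ 2 := by positivity
  have n1 : (0:ℝ) ≤ ‖⟪hM.eigenvectorBasis 1, x⟫‖ ^ 2 := by positivity
  nlinarith

lemma core (ε ε₁ : ℝ) (hε : 0 < ε) (hεc : ε < 1/5) (hε₁ : 0 < ε₁) (hε₁ε : ε₁ ≤ ε)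
    (P Q : Matrix (Fin 2) (Fin 2) ℂ)
    (hP : P.PosSemidef) (hQ : Q.PosSemidef) (hPQ : (P + Q).IsHermitian)
    (i₀ j₀ k₀ : Fin 2) (hij : i₀ ≠ j₀)
    (hi : 1 ≤ hPQ.eigenvalues i₀) (hj : hPQ.eigenvalues j₀ ≤ 1 - ε₁ ^ 3 / 9)
    (hGQ : Finset.univ.filter (fun i => 1 ≤ hQ.1.eigenvalues i) = {k₀})
    (hk : 1 ≤ hQ.1.eigenvalues k₀)
    (hPQnorm : opNorm (P + Q) ≤ 1 + ε₁)
    (hTrP : ε ^ 2 * ((specProj hPQ * (P + Q)).trace).re ≤ ((specProj hPQ * P).trace).re)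
    (hTrQ : (1 - ε₁ ^ 8) * ((specProj hPQ * (P + Q)).trace).re ≤
      ((specProj hQ.1 * Q).trace).re) :
    False := by
  have hε₁5 : ε₁ < 1/5 := lt_of_le_of_lt hε₁ε hεc
  have hj1 : ¬ (1 ≤ hPQ.eigenvalues j₀) := by nlinarith [pow_pos hε₁ 3]
  have hF : Finset.univ.filter (fun i => 1 ≤ hPQ.eigenvalues i) = {i₀} :=
    filter_eq_singleton hij hi hj1
  set bP := hPQ.eigenvectorBasis with hbP
  set w : E := hQ.1.eigenvectorBasis k₀ with hw
  set l1 := hPQ.eigenvalues i₀ with hl1d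
  set l2 := hPQ.eigenvalues j₀ with hl2d
  set mu := hQ.1.eigenvalues k₀ with hmud
  -- traces
  have hT : ((specProj hPQ * (P + Q)).trace).re = l1 := by
    rw [trace_specProj hPQ, hF, Finset.sum_singleton, qf_eigen_self hPQ i₀, Complex.ofReal_re]
  have hTP : ((specProj hPQ * P).trace).re = (star ⇑(bP i₀) ⬝ᵥ (P *ᵥ ⇑(bP i₀))).re := by
    rw [trace_specProj hPQ, hF, Finset.sum_singleton]
  have hTQ : ((specProj hQ.1 * Q).trace).re = mu := by
    rw [trace_specProj hQ.1, hGQ, Finset.sum_singleton, qf_eigen_self hQ.1 k₀, Complex.ofReal_re]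
  rw [hT, hTP] at hTrP
  rw [hT, hTQ] at hTrQ
  set p := (star ⇑(bP i₀) ⬝ᵥ (P *ᵥ ⇑(bP i₀))).re with hpd
  -- l1 ≤ 1 + ε₁
  have hl1le : l1 ≤ 1 + ε₁ := by
    have h1 := quad_re_le_opNorm (P + Q) (bP i₀)
    rw [qf_eigen_self hPQ i₀, Complex.ofReal_re, hPQ.eigenvectorBasis.orthonormal.1 i₀] at h1
    simp at h1
    linarith
  have hl12 : l1 ≤ 2 := by linarith
  -- Parseval for w in bP basis
  set α : ℂ := ⟪bP i₀, w⟫ with hαd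
  set β : ℂ := ⟪bP j₀, w⟫ with hβd
  set a : ℝ := ‖α‖ ^ 2 with had
  set bb : ℝ := ‖β‖ ^ 2 with hbbd
  have ha0 : 0 ≤ a := by positivity
  have hbb0 : 0 ≤ bb := by positivity
  have hwnorm : ‖w‖ = 1 := hQ.1.eigenvectorBasis.orthonormal.1 k₀
  have hab : a + bb = 1 := by
    have h := norm_sq_expansion bP w
    rw [sum_fin2 _ hij, hwnorm, one_pow] at h
    rw [had, hbbd, hαd, hβd]
    linarith
  -- quadratic forms at w
  have hqw : (star ⇑w ⬝ᵥ ((P + Q) *ᵥ ⇑w)).re = l1 * a + l2 * bb := by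
    rw [quad_re_expansion hPQ w, sum_fin2 _ hij]
  set t := (star ⇑w ⬝ᵥ (P *ᵥ ⇑w)).re with htd
  have ht0 : 0 ≤ t := by
    have := hP.re_dotProduct_nonneg ⇑w
    simpa only [RCLike.re_to_complex] using this
  have hsplit : l1 * a + l2 * bb = t + mu := by
    rw [← hqw]
    rw [qf_add P Q ⇑w, Complex.add_re, qf_eigen_self hQ.1 k₀, Complex.ofReal_re]
  -- decomposition of w
  have hrepr : α • (bP i₀) + β • (bP j₀) = w := by
    have h := bP.sum_repr' w
    rwa [sum_fin2 _ hij] at h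
  have hfun : ∀ m : Fin 2, α * bP i₀ m + β * bP j₀ m = w m := by
    intro m
    have h := congrArg (fun z : E => z m) hrepr
    simpa only [PiLp.add_apply, PiLp.smul_apply, smul_eq_mul] using h
  have hE : w - β • (bP j₀) = α • (bP i₀) := by rw [← hrepr]; abel
  have hvec : ⇑w - β • ⇑(bP j₀) = α • ⇑(bP i₀) := by
    funext m
    have h := congrArg (fun z : E => z m) hE
    simpa only [PiLp.sub_apply, PiLp.smul_apply, smul_eq_mul, Pi.sub_apply,
      Pi.smul_apply] using h
  -- quadratic form bound for bP j₀
  set qu := (star ⇑(bP j₀) ⬝ᵥ (P *ᵥ ⇑(bP j₀))).re with hqud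
  have hqu0 : 0 ≤ qu := by
    have := hP.re_dotProduct_nonneg ⇑(bP j₀)
    simpa only [RCLike.re_to_complex] using this
  have hqu1 : qu ≤ 1 := by
    have h := congrArg Complex.re (qf_add P Q ⇑(bP j₀))
    rw [qf_eigen_self hPQ j₀, Complex.ofReal_re, Complex.add_re] at h
    have hQn : 0 ≤ (star ⇑(bP j₀) ⬝ᵥ (Q *ᵥ ⇑(bP j₀))).re := by
      have := hQ.re_dotProduct_nonneg ⇑(bP j₀)
      simpa only [RCLike.re_to_complex] using this
    have hl20 : l2 ≤ 1 := by nlinarith [pow_pos hε₁ 3]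
    linarith
  -- parallelogram bound
  have hq1 : ((a : ℝ) : ℂ) * (star ⇑(bP i₀) ⬝ᵥ (P *ᵥ ⇑(bP i₀)))
      = ((2:ℝ) : ℂ) * (star ⇑w ⬝ᵥ (P *ᵥ ⇑w))
        + ((2:ℝ) : ℂ) * (((bb : ℝ) : ℂ) * (star ⇑(bP j₀) ⬝ᵥ (P *ᵥ ⇑(bP j₀))))
        - star (⇑w + β • ⇑(bP j₀)) ⬝ᵥ (P *ᵥ (⇑w + β • ⇑(bP j₀))) := by
    rw [had, hbbd, ← qf_smul, ← qf_smul, ← hvec]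
    have h := qf_par P ⇑w (β • ⇑(bP j₀))
    push_cast
    linear_combination h
  have hplus0 : 0 ≤ (star (⇑w + β • ⇑(bP j₀)) ⬝ᵥ (P *ᵥ (⇑w + β • ⇑(bP j₀)))).re := by
    have := hP.re_dotProduct_nonneg (⇑w + β • ⇑(bP j₀))
    simpa only [RCLike.re_to_complex] using this
  have hkey : a * p ≤ 2 * t + 2 * (bb * qu) := by
    have h := congrArg Complex.re hq1
    rw [Complex.re_ofReal_mul, Complex.sub_re, Complex.add_re, Complex.re_ofReal_mul,
      Complex.re_ofReal_mul, Complex.re_ofReal_mul] at h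
    rw [← hpd, ← htd, ← hqud] at h
    linarith
  have hp0 : 0 ≤ p := by
    have := hP.re_dotProduct_nonneg ⇑(bP i₀)
    simpa only [RCLike.re_to_complex] using this
  -- now forget matrix-level definitions
  clear_value p t qu a bb l1 l2 mu
  clear hq1 hplus0 hvec hE hfun hrepr hqw hT hTP hTQ hF hGQ hj1 hwnorm hpd htd hqud
  clear hαd hβd had hbbd hl1d hl2d hmud
  clear hw hbP
  clear hPQnorm
  clear α β w bP P Q hP hQ hPQ
  -- numeric part
  have hll : ε₁ ^ 3 / 9 ≤ l1 - l2 := by linarith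
  have hbbl : bb * (ε₁ ^ 3 / 9) ≤ 2 * ε₁ ^ 8 := by nlinarith [pow_pos hε₁ 8]
  have hbb18 : bb ≤ 18 * ε₁ ^ 5 := by
    have h2 : bb * ε₁ ^ 3 ≤ (18 * ε₁ ^ 5) * ε₁ ^ 3 := by nlinarith
    exact le_of_mul_le_mul_right h2 (pow_pos hε₁ 3)
  have h4 : l1 * (a + bb) = l1 := by rw [hab, mul_one]
  have ht2 : t ≤ 2 * ε₁ ^ 8 := by
    nlinarith [h4, mul_nonneg hbb0 (by nlinarith [pow_pos hε₁ 3] : (0:ℝ) ≤ l1 - l2),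
      mul_nonneg (pow_nonneg hε₁.le 8) (by linarith : (0:ℝ) ≤ 2 - l1)]
  have hp : ε ^ 2 ≤ p := by nlinarith [pow_pos hε 2]
  have he155 : ε₁ ^ 5 ≤ (1/5 : ℝ) ^ 5 := pow_le_pow_left₀ hε₁.le (le_of_lt hε₁5) 5
  have ha2 : 1/2 ≤ a := by nlinarith
  have hple : p ≤ 4 * t + 4 * bb := by nlinarith [mul_nonneg hbb0 hqu0]
  have he18 : ε₁ ^ 8 ≤ ε₁ ^ 5 := by
    apply pow_le_pow_of_le_one hε₁.le (by linarith) (by norm_num)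
  have h5 : ε₁ ^ 5 ≤ ε ^ 5 := pow_le_pow_left₀ hε₁.le hε₁ε 5
  have h3 : ε ^ 3 < 1 / 125 := by
    have h := pow_lt_pow_left₀ hεc hε.le (three_ne_zero)
    norm_num at h
    linarith
  nlinarith [pow_pos hε 2, pow_pos hε 3, mul_lt_mul_of_pos_right h3 (pow_pos hε 2)]

lemma psd_opNorm_le_max (Q : Matrix (Fin 2) (Fin 2) ℂ) (hQ : Q.PosSemidef) :
    opNorm Q ≤ max (hQ.1.eigenvalues 0) (hQ.1.eigenvalues 1) := by
  have hmu0 : ∀ k, 0 ≤ hQ.1.eigenvalues k := fun k => hQ.eigenvalues_nonneg k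
  apply opNorm_le_of_eig hQ.1 (le_trans (hmu0 0) (le_max_left _ _))
  intro i
  rw [abs_of_nonneg (hmu0 i)]
  fin_cases i
  exacts [le_max_left _ _, le_max_right _ _]

lemma pick_q (P Q : Matrix (Fin 2) (Fin 2) ℂ) (hP : P.PosSemidef) (hQ : Q.PosSemidef)
    (hPQ : (P + Q).IsHermitian) (j₀ : Fin 2) (hjlt : hPQ.eigenvalues j₀ < 1)
    (hQ1 : 1 ≤ opNorm Q) :
    ∃ k₀ l₀ : Fin 2, k₀ ≠ l₀ ∧ 1 ≤ hQ.1.eigenvalues k₀ ∧ ¬ (1 ≤ hQ.1.eigenvalues l₀) := by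
  have hmax : 1 ≤ max (hQ.1.eigenvalues 0) (hQ.1.eigenvalues 1) :=
    le_trans hQ1 (psd_opNorm_le_max Q hQ)
  have hnotboth : ¬ (1 ≤ hQ.1.eigenvalues 0 ∧ 1 ≤ hQ.1.eigenvalues 1) := by
    rintro ⟨hm0, hm1⟩
    have hge := quad_re_ge_min hQ.1 (hPQ.eigenvectorBasis j₀)
    rw [hPQ.eigenvectorBasis.orthonormal.1 j₀, one_pow, mul_one] at hge
    have h2 := congrArg Complex.re (qf_add P Q ⇑(hPQ.eigenvectorBasis j₀))
    rw [qf_eigen_self hPQ j₀, Complex.add_re, Complex.ofReal_re] at h2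
    have h3 : 0 ≤ (star ⇑(hPQ.eigenvectorBasis j₀) ⬝ᵥ (P *ᵥ ⇑(hPQ.eigenvectorBasis j₀))).re := by
      have := hP.re_dotProduct_nonneg ⇑(hPQ.eigenvectorBasis j₀)
      simpa only [RCLike.re_to_complex] using this
    have h5 : 1 ≤ min (hQ.1.eigenvalues 0) (hQ.1.eigenvalues 1) := le_min hm0 hm1
    linarith
  by_cases h0 : 1 ≤ hQ.1.eigenvalues 0
  · exact ⟨0, 1, by decide, h0, fun h1 => hnotboth ⟨h0, h1⟩⟩
  · refine ⟨1, 0, by decide, ?_, h0⟩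
    rcases max_cases (hQ.1.eigenvalues 0) (hQ.1.eigenvalues 1) with ⟨hm, _⟩ | ⟨hm, _⟩
    · rw [hm] at hmax; exact absurd hmax h0
    · rwa [hm] at hmax

lemma pick_p (ε₁ : ℝ) (hε₁ : 0 < ε₁) (P Q : Matrix (Fin 2) (Fin 2) ℂ)
    (hP : P.PosSemidef) (hQ : Q.PosSemidef) (hPQ : (P + Q).IsHermitian)
    (hQ1 : 1 ≤ opNorm Q)
    (hmin : min (hPQ.eigenvalues 0) (hPQ.eigenvalues 1) ≤ 1 - ε₁ ^ 3 / 9) :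
    ∃ i₀ j₀ : Fin 2, i₀ ≠ j₀ ∧ 1 ≤ hPQ.eigenvalues i₀ ∧
      hPQ.eigenvalues j₀ ≤ 1 - ε₁ ^ 3 / 9 := by
  have hc1 : 1 - ε₁ ^ 3 / 9 < 1 := by nlinarith [pow_pos hε₁ 3]
  have hmuk : ∀ k, hQ.1.eigenvalues k ≤ max (hPQ.eigenvalues 0) (hPQ.eigenvalues 1) := by
    intro k
    have h4 := quad_re_le_max hPQ (hQ.1.eigenvectorBasis k)
    rw [hQ.1.eigenvectorBasis.orthonormal.1 k, one_pow, mul_one] at h4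
    have h2 := congrArg Complex.re (qf_add P Q ⇑(hQ.1.eigenvectorBasis k))
    rw [qf_eigen_self hQ.1 k, Complex.add_re, Complex.ofReal_re] at h2
    have h3 : 0 ≤ (star ⇑(hQ.1.eigenvectorBasis k) ⬝ᵥ (P *ᵥ ⇑(hQ.1.eigenvectorBasis k))).re := by
      have := hP.re_dotProduct_nonneg ⇑(hQ.1.eigenvectorBasis k)
      simpa only [RCLike.re_to_complex] using this
    linarith
  have hmax : 1 ≤ max (hPQ.eigenvalues 0) (hPQ.eigenvalues 1) := by
    have h1 := le_trans hQ1 (psd_opNorm_le_max Q hQ)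
    have h2 := max_le (hmuk 0) (hmuk 1)
    linarith
  by_cases h0 : 1 ≤ hPQ.eigenvalues 0
  · refine ⟨0, 1, by decide, h0, ?_⟩
    rcases min_cases (hPQ.eigenvalues 0) (hPQ.eigenvalues 1) with ⟨hm, hle⟩ | ⟨hm, hle⟩
    · rw [hm] at hmin; linarith
    · rwa [hm] at hmin
  · refine ⟨1, 0, by decide, ?_, ?_⟩
    · rcases max_cases (hPQ.eigenvalues 0) (hPQ.eigenvalues 1) with ⟨hm, _⟩ | ⟨hm, _⟩
      · rw [hm] at hmax; exact absurd hmax h0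
      · rwa [hm] at hmax
    · rcases min_cases (hPQ.eigenvalues 0) (hPQ.eigenvalues 1) with ⟨hm, hle⟩ | ⟨hm, hle⟩
      · rwa [hm] at hmin
      · rw [not_le] at h0
        rcases max_cases (hPQ.eigenvalues 0) (hPQ.eigenvalues 1) with ⟨hm2, _⟩ | ⟨hm2, _⟩ <;>
          rw [hm2] at hmax <;> linarith

/-- **the 2×2 lemma.** For all sufficiently small `ε > 0`
(uniformly: there is a threshold `c > 0`), whenever `0 < ε₁ ≤ ε`
(`ε₁ = 3ε / ln n` in the application) and `P, Q` are `2 × 2` positive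
semidefinite matrices with `‖Q‖ ≥ 1`, `‖P+Q‖ ≤ 1+ε₁`, `λ₂(P+Q) < 1`,
`tr(Π^{P+Q} P) ≥ ε² tr(Π^{P+Q}(P+Q))` and
`tr(Π^Q Q) ≥ (1-ε₁⁸) tr(Π^{P+Q}(P+Q))`, one has `λ₂(P+Q) > 1 - ε₁³/9`. -/
theorem two_by_two_lemma :
    ∃ c : ℝ, 0 < c ∧
      ∀ (ε ε₁ : ℝ), 0 < ε → ε < c → 0 < ε₁ → ε₁ ≤ ε →
      ∀ (P Q : Matrix (Fin 2) (Fin 2) ℂ)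
        (hP : P.PosSemidef) (hQ : Q.PosSemidef) (hPQ : (P + Q).IsHermitian),
        1 ≤ opNorm Q →
        opNorm (P + Q) ≤ 1 + ε₁ →
        lambda2 hPQ < 1 →
        ε ^ 2 * ((specProj hPQ * (P + Q)).trace).re ≤ ((specProj hPQ * P).trace).re →
        (1 - ε₁ ^ 8) * ((specProj hPQ * (P + Q)).trace).re ≤
          ((specProj hQ.1 * Q).trace).re →
        1 - ε₁ ^ 3 / 9 < lambda2 hPQ := by
  refine ⟨1/5, by norm_num, ?_⟩
  intro ε ε₁ hε hεc hε₁ hε₁ε P Q hP hQ hPQ hQ1 hPQn hl2lt hTrP hTrQ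
  by_contra hcon
  push_neg at hcon
  have hmin : min (hPQ.eigenvalues 0) (hPQ.eigenvalues 1) ≤ 1 - ε₁ ^ 3 / 9 := hcon
  obtain ⟨i₀, j₀, hij, hi, hj⟩ := pick_p ε₁ hε₁ P Q hP hQ hPQ hQ1 hmin
  have hjlt : hPQ.eigenvalues j₀ < 1 := by nlinarith [pow_pos hε₁ 3]
  obtain ⟨k₀, l₀, hkl, hk, hnl⟩ := pick_q P Q hP hQ hPQ j₀ hjlt hQ1
  exact core ε ε₁ hε hεc hε₁ hε₁ε P Q hP hQ hPQ i₀ j₀ k₀ hij hi hj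
    (filter_eq_singleton hkl hk hnl) hk hPQn hTrP hTrQ
end

section
/- Let A, B be n×n positive semidefinite matrices with ‖A+B‖ ≤ 1+ε₁, ‖B‖ ≥ 1, tr(Π^{A+B}A) ≥ ε·tr(Π^{A+B}(A+B)), and tr(Π^B B) ≥ (1-ε₁⁹)·tr(Π^{A+B}(A+B)). Then N_{1-ε'}(A+B) > (1 + 2ε/5)·N₁(A+B), where ε' = ε₀/(1+ε₀). -/
set_option maxHeartbeats 1000000

open scoped ComplexOrder

/-- `N_l(M)`: the sum of the eigenvalues of a Hermitian matrix `M` that are at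
least `l`. -/
noncomputable def sumEigAbove {n : ℕ} {M : Matrix (Fin n) (Fin n) ℂ}
    (hM : M.IsHermitian) (l : ℝ) : ℝ :=
  ∑ i ∈ Finset.univ.filter (fun i => l ≤ hM.eigenvalues i), hM.eigenvalues i

namespace MSLAux

open Matrix Finset

variable {n : ℕ}

lemma vecMulVec_mulVec' (a b x : Fin n → ℂ) :
    Matrix.vecMulVec a b *ᵥ x = (b ⬝ᵥ x) • a := by
  funext i
  simp only [Matrix.mulVec, Matrix.vecMulVec_apply, dotProduct, Pi.smul_apply,
    smul_eq_mul, Finset.sum_mul]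
  exact Finset.sum_congr rfl fun j _ => by ring

lemma sum_mulVec' {ι : Type*} (s : Finset ι) (f : ι → Matrix (Fin n) (Fin n) ℂ) (x : Fin n → ℂ) :
    (∑ i ∈ s, f i) *ᵥ x = ∑ i ∈ s, f i *ᵥ x := by
  funext k
  simp only [Matrix.mulVec, dotProduct, Finset.sum_apply, Matrix.sum_apply,
    Finset.sum_mul]
  rw [Finset.sum_comm]

lemma dotProduct_sum' {ι : Type*} (s : Finset ι) (a : Fin n → ℂ) (f : ι → Fin n → ℂ) :
    a ⬝ᵥ (∑ i ∈ s, f i) = ∑ i ∈ s, a ⬝ᵥ f i := by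
  simp only [dotProduct, Finset.sum_apply, Finset.mul_sum]
  rw [Finset.sum_comm]

lemma trace_vecMulVec_mul (a b : Fin n → ℂ) (N : Matrix (Fin n) (Fin n) ℂ) :
    (Matrix.vecMulVec a b * N).trace = b ⬝ᵥ (N *ᵥ a) := by
  simp only [Matrix.trace, Matrix.diag, Matrix.mul_apply, Matrix.vecMulVec_apply,
    dotProduct, Matrix.mulVec, Finset.mul_sum]
  rw [Finset.sum_comm]
  exact Finset.sum_congr rfl fun j _ => Finset.sum_congr rfl fun k _ => by ring

variable {M : Matrix (Fin n) (Fin n) ℂ} (hM : M.IsHermitian)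

lemma ortho_dot (i j : Fin n) :
    star (⇑(hM.eigenvectorBasis i) : Fin n → ℂ) ⬝ᵥ ⇑(hM.eigenvectorBasis j)
      = if i = j then 1 else 0 := by
  have h := hM.eigenvectorBasis.orthonormal
  rw [orthonormal_iff_ite] at h
  simpa [EuclideanSpace.inner_eq_star_dotProduct, dotProduct_comm] using h i j

lemma ext_of_mulVec_basis {A B : Matrix (Fin n) (Fin n) ℂ}
    (h : ∀ i, A *ᵥ ⇑(hM.eigenvectorBasis i) = B *ᵥ ⇑(hM.eigenvectorBasis i)) : A = B := by
  apply Matrix.toEuclideanLin.injective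
  apply Module.Basis.ext hM.eigenvectorBasis.toBasis
  intro i
  rw [OrthonormalBasis.coe_toBasis]
  rw [Matrix.toEuclideanLin_apply, Matrix.toEuclideanLin_apply]
  exact congrArg _ (h i)

lemma resolution :
    (∑ i, Matrix.vecMulVec (⇑(hM.eigenvectorBasis i)) (star ⇑(hM.eigenvectorBasis i)))
      = (1 : Matrix (Fin n) (Fin n) ℂ) := by
  apply ext_of_mulVec_basis hM
  intro j
  rw [sum_mulVec', Matrix.one_mulVec]
  have h : ∀ i : Fin n, Matrix.vecMulVec (⇑(hM.eigenvectorBasis i)) (star ⇑(hM.eigenvectorBasis i))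
      *ᵥ ⇑(hM.eigenvectorBasis j)
      = (if i = j then (1:ℂ) else 0) • ⇑(hM.eigenvectorBasis i) := by
    intro i; rw [vecMulVec_mulVec', ortho_dot hM]
  rw [Finset.sum_congr rfl fun i _ => h i]
  rw [Finset.sum_eq_single j (fun b _ hb => by simp [hb]) (by simp)]
  simp

lemma spectral_sum :
    M = ∑ i, ((hM.eigenvalues i : ℂ)) •
      Matrix.vecMulVec (⇑(hM.eigenvectorBasis i)) (star ⇑(hM.eigenvectorBasis i)) := by
  apply ext_of_mulVec_basis hM
  intro j
  rw [sum_mulVec', hM.mulVec_eigenvectorBasis]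
  have h : ∀ i : Fin n, (((hM.eigenvalues i : ℂ)) •
      Matrix.vecMulVec (⇑(hM.eigenvectorBasis i)) (star ⇑(hM.eigenvectorBasis i)))
      *ᵥ ⇑(hM.eigenvectorBasis j)
      = ((hM.eigenvalues i : ℂ) * if i = j then 1 else 0) • (⇑(hM.eigenvectorBasis i) : Fin n → ℂ) := by
    intro i
    rw [Matrix.smul_mulVec, vecMulVec_mulVec', ortho_dot hM, smul_smul]
  rw [Finset.sum_congr rfl fun i _ => h i]
  rw [Finset.sum_eq_single j (fun b _ hb => by simp [hb]) (by simp)]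
  funext k
  simp [Complex.real_smul]

lemma quad_eq (x : Fin n → ℂ) :
    star x ⬝ᵥ (M *ᵥ x)
      = ((∑ i, hM.eigenvalues i *
          Complex.normSq (star (⇑(hM.eigenvectorBasis i) : Fin n → ℂ) ⬝ᵥ x) : ℝ) : ℂ) := by
  conv_lhs => rw [spectral_sum hM]
  rw [sum_mulVec', dotProduct_sum']
  rw [Complex.ofReal_sum]
  refine Finset.sum_congr rfl fun i _ => ?_
  rw [Matrix.smul_mulVec, vecMulVec_mulVec']
  rw [dotProduct_smul, dotProduct_smul]
  have hsd : star x ⬝ᵥ (⇑(hM.eigenvectorBasis i) : Fin n → ℂ)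
      = star (star (⇑(hM.eigenvectorBasis i) : Fin n → ℂ) ⬝ᵥ x) := by
    rw [Matrix.star_dotProduct]
  rw [hsd]
  rw [smul_eq_mul, smul_eq_mul, Complex.star_def, Complex.mul_conj, Complex.ofReal_mul]

lemma dot_self_eq (x : Fin n → ℂ) :
    star x ⬝ᵥ x
      = ((∑ i, Complex.normSq (star (⇑(hM.eigenvectorBasis i) : Fin n → ℂ) ⬝ᵥ x) : ℝ) : ℂ) := by
  have step : star x ⬝ᵥ x = star x ⬝ᵥ ((∑ i, Matrix.vecMulVec (⇑(hM.eigenvectorBasis i))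
      (star ⇑(hM.eigenvectorBasis i))) *ᵥ x) := by
    rw [resolution hM, Matrix.one_mulVec]
  rw [step, sum_mulVec', dotProduct_sum']
  rw [Complex.ofReal_sum]
  refine Finset.sum_congr rfl fun i _ => ?_
  rw [vecMulVec_mulVec']
  rw [dotProduct_smul]
  have hsd : star x ⬝ᵥ (⇑(hM.eigenvectorBasis i) : Fin n → ℂ)
      = star (star (⇑(hM.eigenvectorBasis i) : Fin n → ℂ) ⬝ᵥ x) := by
    rw [Matrix.star_dotProduct]
  rw [hsd]
  rw [smul_eq_mul, Complex.star_def, Complex.mul_conj]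

lemma norm_sq_eq_sum (x : EuclideanSpace ℂ (Fin n)) :
    ‖x‖^2 = ∑ i, Complex.normSq (star (⇑(hM.eigenvectorBasis i) : Fin n → ℂ) ⬝ᵥ ⇑x) := by
  have h1 : star (⇑x : Fin n → ℂ) ⬝ᵥ ⇑x = ((‖x‖^2 : ℝ) : ℂ) := by
    have h0 : (inner ℂ x x : ℂ) = ((‖x‖^2 : ℝ) : ℂ) := by
      rw [inner_self_eq_norm_sq_to_K]
      norm_cast
    rw [EuclideanSpace.inner_eq_star_dotProduct, dotProduct_comm] at h0
    exact h0
  have h2 := dot_self_eq hM (⇑x : Fin n → ℂ)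
  rw [h1] at h2
  exact_mod_cast h2

lemma dot_eig (i : Fin n) :
    star (⇑(hM.eigenvectorBasis i) : Fin n → ℂ) ⬝ᵥ (M *ᵥ ⇑(hM.eigenvectorBasis i))
      = ((hM.eigenvalues i : ℝ) : ℂ) := by
  rw [hM.mulVec_eigenvectorBasis, dotProduct_smul, ortho_dot hM, if_pos rfl]
  simp [Complex.real_smul]

lemma trace_specProj_mul (N : Matrix (Fin n) (Fin n) ℂ) :
    (specProj hM * N).trace
      = ∑ i ∈ Finset.univ.filter (fun i => 1 ≤ hM.eigenvalues i),
          star (⇑(hM.eigenvectorBasis i) : Fin n → ℂ) ⬝ᵥ (N *ᵥ ⇑(hM.eigenvectorBasis i)) := by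
  unfold specProj
  rw [Matrix.sum_mul, Matrix.trace_sum]
  exact Finset.sum_congr rfl fun i _ => trace_vecMulVec_mul _ _ _

lemma psd_re_nonneg {N : Matrix (Fin n) (Fin n) ℂ} (hN : N.PosSemidef) (x : Fin n → ℂ) :
    0 ≤ (star x ⬝ᵥ (N *ᵥ x)).re := by
  have h := hN.dotProduct_mulVec_nonneg x
  rw [Complex.le_def] at h
  simpa using h.1

lemma dot_mulVec_eig (i : Fin n) (x : Fin n → ℂ) :
    star (⇑(hM.eigenvectorBasis i) : Fin n → ℂ) ⬝ᵥ (M *ᵥ x)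
      = ((hM.eigenvalues i : ℝ) : ℂ) * (star (⇑(hM.eigenvectorBasis i) : Fin n → ℂ) ⬝ᵥ x) := by
  rw [dotProduct_mulVec]
  have h1 : star (⇑(hM.eigenvectorBasis i) : Fin n → ℂ) ᵥ* M
      = star (M *ᵥ ⇑(hM.eigenvectorBasis i)) := by
    rw [Matrix.star_mulVec, hM.eq]
  rw [h1, hM.mulVec_eigenvectorBasis]
  have h2 : star ((hM.eigenvalues i) • (⇑(hM.eigenvectorBasis i) : Fin n → ℂ))
      = (hM.eigenvalues i) • star (⇑(hM.eigenvectorBasis i) : Fin n → ℂ) := by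
    rw [star_smul, star_trivial]
  rw [h2, smul_dotProduct]
  simp [Complex.real_smul]

lemma eig_le_opNorm (i : Fin n) : hM.eigenvalues i ≤ opNorm M := by
  have hval : (Matrix.toEuclideanCLM (𝕜 := ℂ) M) (hM.eigenvectorBasis i)
      = hM.eigenvalues i • hM.eigenvectorBasis i := by
    apply (WithLp.equiv 2 (Fin n → ℂ)).injective
    rw [WithLp.equiv_apply, WithLp.equiv_apply, Matrix.ofLp_toEuclideanCLM]
    rw [hM.mulVec_eigenvectorBasis]
    rfl
  have h1 := (Matrix.toEuclideanCLM (𝕜 := ℂ) M).le_opNorm (hM.eigenvectorBasis i)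
  rw [hval, norm_smul] at h1
  have hn1 : ‖hM.eigenvectorBasis i‖ = 1 := hM.eigenvectorBasis.orthonormal.1 i
  rw [hn1, mul_one, mul_one] at h1
  calc hM.eigenvalues i ≤ |hM.eigenvalues i| := le_abs_self _
  _ = ‖hM.eigenvalues i‖ := (Real.norm_eq_abs _).symm
  _ ≤ opNorm M := h1

lemma exists_eig_ge_one {B : Matrix (Fin n) (Fin n) ℂ} (hB : B.PosSemidef) (hn : 0 < n)
    (h1 : 1 ≤ opNorm B) : ∃ j, 1 ≤ hB.1.eigenvalues j := by
  by_contra hcon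
  push_neg at hcon
  have hne : (Finset.univ : Finset (Fin n)).Nonempty := ⟨⟨0, hn⟩, Finset.mem_univ _⟩
  set C := Finset.univ.sup' hne hB.1.eigenvalues with hC
  have hC1 : C < 1 := (Finset.sup'_lt_iff hne).mpr fun j _ => hcon j
  have hC0 : 0 ≤ C :=
    le_trans (hB.eigenvalues_nonneg ⟨0, hn⟩) (Finset.le_sup' _ (Finset.mem_univ _))
  have hCj : ∀ j, hB.1.eigenvalues j ≤ C := fun j => Finset.le_sup' _ (Finset.mem_univ j)
  have hop : opNorm B ≤ C := by
    refine ContinuousLinearMap.opNorm_le_bound _ hC0 fun x => ?_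
    set T := Matrix.toEuclideanCLM (𝕜 := ℂ) B
    have hy : (⇑(T x) : Fin n → ℂ) = B *ᵥ ⇑x := by
      exact Matrix.ofLp_toEuclideanCLM _ _
    have hy2 : ‖T x‖^2
        = ∑ j, Complex.normSq (star (⇑(hB.1.eigenvectorBasis j) : Fin n → ℂ) ⬝ᵥ (B *ᵥ ⇑x)) := by
      rw [norm_sq_eq_sum hB.1 (T x), hy]
    have hx2 : ‖x‖^2
        = ∑ j, Complex.normSq (star (⇑(hB.1.eigenvectorBasis j) : Fin n → ℂ) ⬝ᵥ ⇑x) :=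
      norm_sq_eq_sum hB.1 x
    have hterm : ∀ j, Complex.normSq (star (⇑(hB.1.eigenvectorBasis j) : Fin n → ℂ) ⬝ᵥ (B *ᵥ ⇑x))
        ≤ C^2 * Complex.normSq (star (⇑(hB.1.eigenvectorBasis j) : Fin n → ℂ) ⬝ᵥ ⇑x) := by
      intro j
      rw [dot_mulVec_eig hB.1, Complex.normSq_mul, Complex.normSq_ofReal]
      have hmm : hB.1.eigenvalues j * hB.1.eigenvalues j ≤ C * C :=
        mul_le_mul (hCj j) (hCj j) (hB.eigenvalues_nonneg j) hC0
      have hq0 := Complex.normSq_nonneg (star (⇑(hB.1.eigenvectorBasis j) : Fin n → ℂ) ⬝ᵥ ⇑x)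
      nlinarith [mul_le_mul_of_nonneg_right hmm hq0]
    have hsum : ‖T x‖^2 ≤ C^2 * ‖x‖^2 := by
      rw [hy2, hx2, Finset.mul_sum]
      exact Finset.sum_le_sum fun j _ => hterm j
    nlinarith [norm_nonneg (T x), norm_nonneg x, mul_nonneg hC0 (norm_nonneg x)]
  unfold opNorm at h1
  unfold opNorm at hop
  linarith

lemma span_orth {F : Finset (Fin n)} {x : EuclideanSpace ℂ (Fin n)}
    (hx : x ∈ Submodule.span ℂ (Set.range
      (⇑hM.eigenvectorBasis ∘ (Subtype.val : {j // j ∈ F} → Fin n)))) :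
    ∀ k, k ∉ F → star (⇑(hM.eigenvectorBasis k) : Fin n → ℂ) ⬝ᵥ ⇑x = 0 := by
  intro k hk
  induction hx using Submodule.span_induction with
  | mem y hy =>
      obtain ⟨⟨j, hj⟩, rfl⟩ := hy
      rw [Function.comp_apply, ortho_dot hM]
      have : k ≠ j := fun h => hk (h ▸ hj)
      simp [this]
  | zero => simp
  | add y z hy hz hy' hz' =>
      have hc : (⇑(y + z) : Fin n → ℂ) = ⇑y + ⇑z := rfl
      rw [hc, dotProduct_add, hy', hz', add_zero]
  | smul c y hy hy' =>
      have hc : (⇑(c • y) : Fin n → ℂ) = c • ⇑y := rfl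
      rw [hc, dotProduct_smul, hy', smul_zero]

lemma card_proj_le {A B : Matrix (Fin n) (Fin n) ℂ} (hA : A.PosSemidef) (hB : B.PosSemidef)
    (hAB : (A + B).IsHermitian) :
    (Finset.univ.filter fun j => 1 ≤ hB.1.eigenvalues j).card ≤
    (Finset.univ.filter fun i => 1 ≤ hAB.eigenvalues i).card := by
  classical
  by_contra hcon
  push_neg at hcon
  set J := Finset.univ.filter fun j => 1 ≤ hB.1.eigenvalues j with hJ
  set I := Finset.univ.filter fun i => 1 ≤ hAB.eigenvalues i with hI
  set V : Submodule ℂ (EuclideanSpace ℂ (Fin n)) :=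
    Submodule.span ℂ (Set.range
      (⇑hB.1.eigenvectorBasis ∘ (Subtype.val : {j // j ∈ J} → Fin n))) with hV
  set W : Submodule ℂ (EuclideanSpace ℂ (Fin n)) :=
    Submodule.span ℂ (Set.range
      (⇑hAB.eigenvectorBasis ∘ (Subtype.val : {i // i ∈ Iᶜ} → Fin n))) with hW
  have hVrank : Module.finrank ℂ V = J.card := by
    rw [hV, finrank_span_eq_card
      ((hB.1.eigenvectorBasis.orthonormal.comp _ Subtype.val_injective).linearIndependent)]
    exact Fintype.card_coe _
  have hWrank : Module.finrank ℂ W = Iᶜ.card := by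
    rw [hW, finrank_span_eq_card
      ((hAB.eigenvectorBasis.orthonormal.comp _ Subtype.val_injective).linearIndependent)]
    exact Fintype.card_coe _
  have hsup : Module.finrank ℂ ↥(V ⊔ W) ≤ n := by
    refine le_trans (Submodule.finrank_le _) ?_
    simp [finrank_euclideanSpace]
  have hIcard : I.card ≤ n := by
    refine le_trans (Finset.card_le_univ I) ?_
    simp
  have hsum := Submodule.finrank_sup_add_finrank_inf_eq V W
  have hcompl : Iᶜ.card = n - I.card := by
    rw [Finset.card_compl]
    simp
  have hint : 0 < Module.finrank ℂ ↥(V ⊓ W) := by omega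
  have hne : V ⊓ W ≠ ⊥ := by
    intro h
    rw [h, finrank_bot] at hint
    exact lt_irrefl 0 hint
  obtain ⟨x, hxVW, hx0⟩ := (Submodule.ne_bot_iff _).mp hne
  have hxV : x ∈ V := hxVW.1
  have hxW : x ∈ W := hxVW.2
  have hcV : ∀ j, j ∉ J → star (⇑(hB.1.eigenvectorBasis j) : Fin n → ℂ) ⬝ᵥ ⇑x = 0 :=
    span_orth hB.1 hxV
  have hcW : ∀ i, i ∈ I → star (⇑(hAB.eigenvectorBasis i) : Fin n → ℂ) ⬝ᵥ ⇑x = 0 := by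
    intro i hi
    exact span_orth hAB hxW i (by simp [hi])
  have hxn : ‖x‖ ≠ 0 := norm_ne_zero_iff.mpr hx0
  have hxpos : 0 < ‖x‖^2 := by positivity
  -- lower bound for the B-quadratic form
  have hBlow : ‖x‖^2 ≤ (star (⇑x : Fin n → ℂ) ⬝ᵥ (B *ᵥ ⇑x)).re := by
    rw [quad_eq hB.1 (⇑x : Fin n → ℂ), Complex.ofReal_re, norm_sq_eq_sum hB.1 x]
    refine Finset.sum_le_sum fun j _ => ?_
    by_cases hj : j ∈ J
    · have hj1 : 1 ≤ hB.1.eigenvalues j := by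
        rw [hJ] at hj
        simpa using hj
      nlinarith [Complex.normSq_nonneg (star (⇑(hB.1.eigenvectorBasis j) : Fin n → ℂ) ⬝ᵥ ⇑x)]
    · rw [hcV j hj]
      simp
  -- strict upper bound for the S-quadratic form
  have hSup : (star (⇑x : Fin n → ℂ) ⬝ᵥ ((A + B) *ᵥ ⇑x)).re < ‖x‖^2 := by
    rw [quad_eq hAB (⇑x : Fin n → ℂ), Complex.ofReal_re, norm_sq_eq_sum hAB x]
    have hex : ∃ i, Complex.normSq (star (⇑(hAB.eigenvectorBasis i) : Fin n → ℂ) ⬝ᵥ ⇑x) ≠ 0 := by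
      by_contra hall
      push_neg at hall
      have : ‖x‖^2 = 0 := by
        rw [norm_sq_eq_sum hAB x]
        exact Finset.sum_eq_zero fun i _ => hall i
      rw [this] at hxpos
      exact lt_irrefl 0 hxpos
    obtain ⟨i₀, hi₀⟩ := hex
    have hi₀I : i₀ ∉ I := by
      intro hmem
      exact hi₀ (by rw [hcW i₀ hmem]; simp)
    have hlam : hAB.eigenvalues i₀ < 1 := by
      by_contra hge
      push_neg at hge
      exact hi₀I (by rw [hI]; simp [hge])
    refine Finset.sum_lt_sum (fun i _ => ?_) ⟨i₀, Finset.mem_univ i₀, ?_⟩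
    · by_cases hi : i ∈ I
      · rw [hcW i hi]
        simp
      · have : hAB.eigenvalues i < 1 := by
          by_contra hge
          push_neg at hge
          exact hi (by rw [hI]; simp [hge])
        nlinarith [Complex.normSq_nonneg (star (⇑(hAB.eigenvectorBasis i) : Fin n → ℂ) ⬝ᵥ ⇑x)]
    · have hpos : 0 < Complex.normSq (star (⇑(hAB.eigenvectorBasis i₀) : Fin n → ℂ) ⬝ᵥ ⇑x) :=
        lt_of_le_of_ne (Complex.normSq_nonneg _) (Ne.symm hi₀)
      nlinarith
  have hq : (star (⇑x : Fin n → ℂ) ⬝ᵥ ((A + B) *ᵥ ⇑x)).re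
      = (star (⇑x : Fin n → ℂ) ⬝ᵥ (A *ᵥ ⇑x)).re + (star (⇑x : Fin n → ℂ) ⬝ᵥ (B *ᵥ ⇑x)).re := by
    rw [Matrix.add_mulVec, dotProduct_add, Complex.add_re]
  have hA0 := psd_re_nonneg hA (⇑x : Fin n → ℂ)
  linarith

end MSLAux

lemma numeric_core (L ε ε₀ ε₁ ε' N1 Nb m r t s : ℝ)
    (hL : 300 ≤ L) (hε : 0 < ε) (hεc : ε ≤ 1/2)
    (hε₀ : ε₀ = ε^2/L^2) (hε₁ : ε₁ = 3*ε/L) (hε' : ε' = ε₀/(1+ε₀))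
    (hN1 : 1 ≤ N1) (hNb1 : (1-ε₁^9)*N1 ≤ Nb) (hNb2 : Nb ≤ (1+ε₁)*m)
    (hmr : m ≤ r) (hrN : r ≤ N1)
    (ht : t ≤ (1-ε)*N1) (hs0 : 0 ≤ s)
    (hmaster : Nb ≤ N1 - r + t + s + (1-ε')*(m - t - s)) :
    (1+2*ε/5)*N1 < N1 + (1-ε')*s := by
  have hL0 : (0:ℝ) < L := by linarith
  set a := ε/L with ha
  have ha0 : 0 < a := div_pos hε hL0
  have ha6 : a ≤ 1/600 := by
    rw [ha, div_le_iff₀ hL0]; nlinarith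
  have haε : a ≤ ε/300 := by
    rw [ha]; exact div_le_div_of_nonneg_left hε.le (by norm_num) hL
  have hε₀a : ε₀ = a^2 := by rw [hε₀, ha, div_pow]
  have hε₁a : ε₁ = 3*a := by rw [hε₁, ha, mul_div_assoc]
  have hε'pos : 0 < ε' := by rw [hε', hε₀a]; positivity
  have hε'le : ε' ≤ a^2 := by
    rw [hε', hε₀a]; exact div_le_self (sq_nonneg a) (by nlinarith [sq_nonneg a])
  have hε'ge : a^2/2 ≤ ε' := by
    rw [hε', hε₀a]
    exact div_le_div_of_nonneg_left (sq_nonneg a) (by positivity) (by nlinarith [sq_nonneg a])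
  have hε₁0 : 0 < ε₁ := by rw [hε₁a]; linarith
  have hε₁le : ε₁ ≤ ε/100 := by rw [hε₁a]; nlinarith
  have hε₁1 : ε₁ ≤ 1 := by nlinarith
  have h9 : ε₁^9 ≤ ε₁ := by
    calc ε₁^9 ≤ ε₁^1 := pow_le_pow_of_le_one hε₁0.le hε₁1 (by norm_num)
    _ = ε₁ := pow_one _
  have hX0 : (0:ℝ) ≤ a^2*ε := mul_nonneg (sq_nonneg a) hε.le
  have hb : a^7 ≤ (1/600)^6 * (ε/300) := by
    calc a^7 = a^6 * a := by ring
    _ ≤ (1/600)^6 * (ε/300) :=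
        mul_le_mul (pow_le_pow_left₀ ha0.le ha6 6) haε ha0.le (by positivity)
  have hkey : ε₁^9 ≤ ε' * ε / 100 := by
    have h91 : ε₁^9 = 19683 * (a^2 * a^7) := by rw [hε₁a]; ring
    have h92 : 19683 * (a^2 * a^7) ≤ 19683 * (a^2 * ((1/600)^6 * (ε/300))) := by
      have := mul_le_mul_of_nonneg_left hb (sq_nonneg a)
      linarith
    have h93 : 19683 * (a^2*((1/600)^6*(ε/300))) ≤ (a^2/2) * (ε/100) := by
      calc 19683 * (a^2*((1/600)^6*(ε/300))) = (19683*(1/600:ℝ)^6/300) * (a^2*ε) := by ring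
      _ ≤ (1/200) * (a^2*ε) := mul_le_mul_of_nonneg_right (by norm_num) hX0
      _ = (a^2/2)*(ε/100) := by ring
    have h94 : (a^2/2) * (ε/100) ≤ ε' * (ε/100) :=
      mul_le_mul_of_nonneg_right hε'ge (by positivity)
    have h95 : ε' * (ε/100) = ε' * ε / 100 := by ring
    linarith
  have hN10 : (0:ℝ) ≤ N1 := by linarith
  have hM1 : (1 - ε₁ - ε₁^9) * N1 ≤ m := by
    have hA : 0 ≤ ε₁^2*N1 := mul_nonneg (by positivity) hN10
    have hB : 0 ≤ ε₁^10*N1 := mul_nonneg (by positivity) hN10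
    have h1 : (1+ε₁) * ((1 - ε₁ - ε₁^9)*N1) ≤ (1+ε₁) * m := by linarith [hNb1, hNb2, hA, hB]
    exact le_of_mul_le_mul_left h1 (by linarith : (0:ℝ) < 1+ε₁)
  have step1 : Nb - N1 + ε'*m - ε'*t ≤ ε'*s := by linarith [hmaster, hmr]
  have step2 : ε'*t ≤ ε'*((1-ε)*N1) := mul_le_mul_of_nonneg_left ht hε'pos.le
  have step3 : ε'*((1 - ε₁ - ε₁^9)*N1) ≤ ε'*m := mul_le_mul_of_nonneg_left hM1 hε'pos.le
  have hb1 : ε'*N1*ε₁ ≤ ε'*N1*(ε/100) :=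
    mul_le_mul_of_nonneg_left hε₁le (mul_nonneg hε'pos.le hN10)
  have hb2 : ε'*N1*ε₁^9 ≤ ε'*N1*(ε/100) :=
    mul_le_mul_of_nonneg_left (le_trans h9 hε₁le) (mul_nonneg hε'pos.le hN10)
  have hb3 : ε₁^9*N1 ≤ (ε'*ε/100)*N1 := mul_le_mul_of_nonneg_right hkey hN10
  have hs : (97/100)*(ε'*(ε*N1)) ≤ ε' * s := by
    linarith [step1, step2, step3, hb1, hb2, hb3, hNb1]
  have hs' : (97/100)*(ε*N1) ≤ s := by
    have h2 := le_of_mul_le_mul_left (by linarith : ε'*((97/100)*(ε*N1)) ≤ ε'*s) hε'pos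
    linarith
  have hε's : ε' ≤ 1/100 := by nlinarith [sq_nonneg a]
  have hεN : 0 < ε*N1 := mul_pos hε (by linarith)
  have h99 : ε'*s ≤ (1/100)*s := mul_le_mul_of_nonneg_right hε's hs0
  nlinarith [hs', h99, hεN, hs0]

namespace MSLAux
open Matrix Finset

theorem main_aux :
    ∃ c : ℝ, 0 < c ∧ ∃ N₀ : ℕ, ∀ n : ℕ, N₀ ≤ n →
      ∀ ε : ℝ, 0 < ε → ε < c →
      ∀ (ε₀ ε₁ ε' : ℝ),
        ε₀ = ε ^ 2 / (Real.log n) ^ 2 →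
        ε₁ = 3 * ε / Real.log n →
        ε' = ε₀ / (1 + ε₀) →
      ∀ (A B : Matrix (Fin n) (Fin n) ℂ)
        (hA : A.PosSemidef) (hB : B.PosSemidef) (hAB : (A + B).IsHermitian),
        opNorm (A + B) ≤ 1 + ε₁ →
        1 ≤ opNorm B →
        ε * ((specProj hAB * (A + B)).trace).re ≤ ((specProj hAB * A).trace).re →
        (1 - ε₁ ^ 9) * ((specProj hAB * (A + B)).trace).re ≤
          ((specProj hB.1 * B).trace).re →
        (1 + 2 * ε / 5) * sumEigAbove hAB 1 < sumEigAbove hAB (1 - ε') := by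
  classical
  refine ⟨1/2, by norm_num, Nat.ceil (Real.exp 300) + 1, ?_⟩
  intro n hn ε hε hεc ε₀ ε₁ ε' hε₀ hε₁ hε' A B hA hB hAB hnS hnB hyp1 hyp2
  have hn0 : 0 < n := lt_of_lt_of_le (Nat.succ_pos _) hn
  have hL : (300:ℝ) ≤ Real.log n := by
    have h2 : (Nat.ceil (Real.exp 300) : ℝ) ≤ n := by
      exact_mod_cast le_trans (Nat.le_succ _) hn
    have h1 : (Real.exp 300 : ℝ) ≤ n := le_trans (Nat.le_ceil _) h2
    calc (300:ℝ) = Real.log (Real.exp 300) := (Real.log_exp 300).symm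
      _ ≤ Real.log n := Real.log_le_log (Real.exp_pos _) h1
  have hlogpos : (0:ℝ) < Real.log n := by linarith
  have hε₀0 : 0 < ε₀ := by rw [hε₀]; positivity
  have hε'0 : 0 < ε' := by rw [hε']; positivity
  have hε'1 : ε' < 1 := by
    rw [hε', div_lt_one (by linarith)]
    linarith
  have hlam_le : ∀ i, hAB.eigenvalues i ≤ 1 + ε₁ :=
    fun i => le_trans (MSLAux.eig_le_opNorm hAB i) hnS
  set I : Finset (Fin n) := Finset.univ.filter (fun i => 1 ≤ hAB.eigenvalues i) with hIdef
  set I' : Finset (Fin n) := Finset.univ.filter (fun i => 1 - ε' ≤ hAB.eigenvalues i) with hI'def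
  set J : Finset (Fin n) := Finset.univ.filter (fun j => 1 ≤ hB.1.eigenvalues j) with hJdef
  set p : Fin n → Fin n → ℝ := fun i j => Complex.normSq
      (star (⇑(hB.1.eigenvectorBasis j) : Fin n → ℂ) ⬝ᵥ ⇑(hAB.eigenvectorBasis i)) with hpdef
  set w : Fin n → ℝ := fun i => ∑ j ∈ J, p i j with hwdef
  set N1 := ∑ i ∈ I, hAB.eigenvalues i with hN1def
  set Nb := ∑ j ∈ J, hB.1.eigenvalues j with hNbdef
  set t := ∑ i ∈ I, w i with htdef
  set s := ∑ i ∈ I' \ I, w i with hsdef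
  have hp0 : ∀ i j, 0 ≤ p i j := fun i j => Complex.normSq_nonneg _
  have hrow : ∀ i, ∑ j, p i j = 1 := by
    intro i
    have h := MSLAux.norm_sq_eq_sum hB.1 (hAB.eigenvectorBasis i)
    rw [hAB.eigenvectorBasis.orthonormal.1 i] at h
    simpa [hpdef] using h.symm
  have hsym : ∀ i j, p i j = Complex.normSq
      (star (⇑(hAB.eigenvectorBasis i) : Fin n → ℂ) ⬝ᵥ ⇑(hB.1.eigenvectorBasis j)) := by
    intro i j
    rw [hpdef]
    simp only
    rw [Matrix.star_dotProduct]; exact Complex.normSq_conj _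
  have hcol : ∀ j, ∑ i, p i j = 1 := by
    intro j
    have h := MSLAux.norm_sq_eq_sum hAB (hB.1.eigenvectorBasis j)
    rw [hB.1.eigenvectorBasis.orthonormal.1 j] at h
    rw [Finset.sum_congr rfl (fun i _ => hsym i j)]
    simpa using h.symm
  have hw0 : ∀ i, 0 ≤ w i := fun i => Finset.sum_nonneg fun j _ => hp0 i j
  have hw1 : ∀ i, w i ≤ 1 := by
    intro i
    calc w i ≤ ∑ j, p i j :=
      Finset.sum_le_sum_of_subset_of_nonneg (Finset.subset_univ J) (fun j _ _ => hp0 i j)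
    _ = 1 := hrow i
  have hwm : ∑ i, w i = (J.card : ℝ) := by
    rw [hwdef]
    simp only
    rw [Finset.sum_comm]
    rw [Finset.sum_congr rfl fun j _ => hcol j]
    simp
  have hreB : ∀ i, (star (⇑(hAB.eigenvectorBasis i) : Fin n → ℂ)
      ⬝ᵥ (B *ᵥ ⇑(hAB.eigenvectorBasis i))).re = ∑ j, hB.1.eigenvalues j * p i j := by
    intro i
    rw [MSLAux.quad_eq hB.1, Complex.ofReal_re]
  have hreB_ge : ∀ i, w i ≤ (star (⇑(hAB.eigenvectorBasis i) : Fin n → ℂ)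
      ⬝ᵥ (B *ᵥ ⇑(hAB.eigenvectorBasis i))).re := by
    intro i
    rw [hreB i]
    calc w i = ∑ j ∈ J, p i j := rfl
    _ ≤ ∑ j ∈ J, hB.1.eigenvalues j * p i j := by
        refine Finset.sum_le_sum fun j hj => ?_
        have h1 : 1 ≤ hB.1.eigenvalues j := (Finset.mem_filter.mp hj).2
        nlinarith [hp0 i j]
    _ ≤ ∑ j, hB.1.eigenvalues j * p i j := by
        refine Finset.sum_le_sum_of_subset_of_nonneg (Finset.subset_univ J) fun j _ _ =>
          mul_nonneg (hB.eigenvalues_nonneg j) (hp0 i j)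
  have htrS : ((specProj hAB * (A + B)).trace).re = N1 := by
    rw [MSLAux.trace_specProj_mul hAB, Complex.re_sum, hN1def, ← hIdef]
    refine Finset.sum_congr rfl fun i _ => ?_
    rw [MSLAux.dot_eig hAB i, Complex.ofReal_re]
  have htrB : ((specProj hB.1 * B).trace).re = Nb := by
    rw [MSLAux.trace_specProj_mul hB.1, Complex.re_sum, hNbdef, ← hJdef]
    refine Finset.sum_congr rfl fun j _ => ?_
    rw [MSLAux.dot_eig hB.1 j, Complex.ofReal_re]
  have htrA : ((specProj hAB * A).trace).re = ∑ i ∈ I, (star (⇑(hAB.eigenvectorBasis i) : Fin n → ℂ)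
      ⬝ᵥ (A *ᵥ ⇑(hAB.eigenvectorBasis i))).re := by
    rw [MSLAux.trace_specProj_mul hAB, Complex.re_sum, ← hIdef]
  have hsplitq : ∀ i, (star (⇑(hAB.eigenvectorBasis i) : Fin n → ℂ)
        ⬝ᵥ (A *ᵥ ⇑(hAB.eigenvectorBasis i))).re
      + (star (⇑(hAB.eigenvectorBasis i) : Fin n → ℂ)
        ⬝ᵥ (B *ᵥ ⇑(hAB.eigenvectorBasis i))).re = hAB.eigenvalues i := by
    intro i
    have h1 := MSLAux.dot_eig hAB i
    rw [Matrix.add_mulVec, dotProduct_add] at h1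
    have := congrArg Complex.re h1
    simpa using this
  have ht_le : t ≤ (1-ε)*N1 := by
    rw [htrS, htrA] at hyp1
    have h2 : ∑ i ∈ I, (star (⇑(hAB.eigenvectorBasis i) : Fin n → ℂ)
        ⬝ᵥ (A *ᵥ ⇑(hAB.eigenvectorBasis i))).re ≤ N1 - t := by
      have hterm : ∀ i ∈ I, (star (⇑(hAB.eigenvectorBasis i) : Fin n → ℂ)
          ⬝ᵥ (A *ᵥ ⇑(hAB.eigenvectorBasis i))).re ≤ hAB.eigenvalues i - w i := by
        intro i _
        have e1 := hsplitq i
        have e2 := hreB_ge i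
        linarith
      calc ∑ i ∈ I, (star (⇑(hAB.eigenvectorBasis i) : Fin n → ℂ)
          ⬝ᵥ (A *ᵥ ⇑(hAB.eigenvectorBasis i))).re
          ≤ ∑ i ∈ I, (hAB.eigenvalues i - w i) := Finset.sum_le_sum hterm
      _ = N1 - t := by rw [Finset.sum_sub_distrib, hN1def, htdef]
    linarith
  have hW : Nb ≤ ∑ i, hAB.eigenvalues i * w i := by
    have hswap : ∑ i, hAB.eigenvalues i * w i = ∑ j ∈ J, ∑ i, hAB.eigenvalues i * p i j := by
      rw [hwdef]
      simp only [Finset.mul_sum]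
      rw [Finset.sum_comm]
    rw [hswap, hNbdef]
    refine Finset.sum_le_sum fun j _ => ?_
    have hqS : (star (⇑(hB.1.eigenvectorBasis j) : Fin n → ℂ)
        ⬝ᵥ ((A + B) *ᵥ ⇑(hB.1.eigenvectorBasis j))).re = ∑ i, hAB.eigenvalues i * p i j := by
      rw [MSLAux.quad_eq hAB, Complex.ofReal_re]
      exact Finset.sum_congr rfl fun i _ => by rw [hsym i j]
    have hqB : (star (⇑(hB.1.eigenvectorBasis j) : Fin n → ℂ)
        ⬝ᵥ (B *ᵥ ⇑(hB.1.eigenvectorBasis j))).re = hB.1.eigenvalues j := by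
      rw [MSLAux.dot_eig hB.1 j, Complex.ofReal_re]
    have hsp : (star (⇑(hB.1.eigenvectorBasis j) : Fin n → ℂ)
          ⬝ᵥ ((A + B) *ᵥ ⇑(hB.1.eigenvectorBasis j))).re
        = (star (⇑(hB.1.eigenvectorBasis j) : Fin n → ℂ)
          ⬝ᵥ (A *ᵥ ⇑(hB.1.eigenvectorBasis j))).re
        + (star (⇑(hB.1.eigenvectorBasis j) : Fin n → ℂ)
          ⬝ᵥ (B *ᵥ ⇑(hB.1.eigenvectorBasis j))).re := by
      rw [Matrix.add_mulVec, dotProduct_add, Complex.add_re]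
    have hA0 := MSLAux.psd_re_nonneg hA (⇑(hB.1.eigenvectorBasis j) : Fin n → ℂ)
    linarith
  have hmu_le : ∀ j, hB.1.eigenvalues j ≤ 1 + ε₁ := by
    intro j
    have hqS : (star (⇑(hB.1.eigenvectorBasis j) : Fin n → ℂ)
        ⬝ᵥ ((A + B) *ᵥ ⇑(hB.1.eigenvectorBasis j))).re = ∑ i, hAB.eigenvalues i * p i j := by
      rw [MSLAux.quad_eq hAB, Complex.ofReal_re]
      exact Finset.sum_congr rfl fun i _ => by rw [hsym i j]
    have hqB : (star (⇑(hB.1.eigenvectorBasis j) : Fin n → ℂ)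
        ⬝ᵥ (B *ᵥ ⇑(hB.1.eigenvectorBasis j))).re = hB.1.eigenvalues j := by
      rw [MSLAux.dot_eig hB.1 j, Complex.ofReal_re]
    have hsp : (star (⇑(hB.1.eigenvectorBasis j) : Fin n → ℂ)
          ⬝ᵥ ((A + B) *ᵥ ⇑(hB.1.eigenvectorBasis j))).re
        = (star (⇑(hB.1.eigenvectorBasis j) : Fin n → ℂ)
          ⬝ᵥ (A *ᵥ ⇑(hB.1.eigenvectorBasis j))).re
        + (star (⇑(hB.1.eigenvectorBasis j) : Fin n → ℂ)
          ⬝ᵥ (B *ᵥ ⇑(hB.1.eigenvectorBasis j))).re := by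
      rw [Matrix.add_mulVec, dotProduct_add, Complex.add_re]
    have hA0 := MSLAux.psd_re_nonneg hA (⇑(hB.1.eigenvectorBasis j) : Fin n → ℂ)
    have hub : ∑ i, hAB.eigenvalues i * p i j ≤ 1 + ε₁ := by
      calc ∑ i, hAB.eigenvalues i * p i j ≤ ∑ i, (1+ε₁) * p i j :=
        Finset.sum_le_sum fun i _ => mul_le_mul_of_nonneg_right (hlam_le i) (hp0 i j)
      _ = (1+ε₁) * ∑ i, p i j := by rw [Finset.mul_sum]
      _ = 1 + ε₁ := by rw [hcol j, mul_one]
    linarith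
  have hNb_m : Nb ≤ (1+ε₁) * (J.card : ℝ) := by
    rw [hNbdef]
    calc ∑ j ∈ J, hB.1.eigenvalues j ≤ ∑ _j ∈ J, (1+ε₁) :=
      Finset.sum_le_sum fun j _ => hmu_le j
    _ = (1+ε₁) * (J.card:ℝ) := by rw [Finset.sum_const, nsmul_eq_mul]; ring
  have hcard : J.card ≤ I.card := MSLAux.card_proj_le hA hB hAB
  have hJne : J.Nonempty := by
    obtain ⟨j, hj⟩ := MSLAux.exists_eig_ge_one hB hn0 hnB
    exact ⟨j, by rw [hJdef]; simp [hj]⟩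
  have hrN1 : (I.card : ℝ) ≤ N1 := by
    rw [hN1def]
    calc (I.card:ℝ) = ∑ _i ∈ I, (1:ℝ) := by rw [Finset.sum_const, nsmul_eq_mul, mul_one]
    _ ≤ ∑ i ∈ I, hAB.eigenvalues i :=
      Finset.sum_le_sum fun i hi => (Finset.mem_filter.mp hi).2
  have hN1_1 : 1 ≤ N1 := by
    have h1 : 1 ≤ J.card := Finset.card_pos.mpr hJne
    have h2 : (1:ℝ) ≤ (I.card:ℝ) := by exact_mod_cast le_trans h1 hcard
    linarith
  have hII' : I ⊆ I' := by
    intro i hi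
    rw [hI'def]
    rw [hIdef] at hi
    simp only [Finset.mem_filter] at *
    exact ⟨hi.1, by linarith [hi.2]⟩
  have hsplit1 : ∀ f : Fin n → ℝ, ∑ i ∈ I', f i = ∑ i ∈ I, f i + ∑ i ∈ I' \ I, f i := by
    intro f; rw [add_comm]; exact (Finset.sum_sdiff hII').symm
  have hsplit2 : ∀ f : Fin n → ℝ, ∑ i, f i = ∑ i ∈ I', f i + ∑ i ∈ Finset.univ \ I', f i := by
    intro f; rw [add_comm]; exact (Finset.sum_sdiff (Finset.subset_univ I')).symm
  have hout_w : ∑ i ∈ Finset.univ \ I', w i = (J.card:ℝ) - t - s := by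
    have h := hsplit2 w
    rw [hsplit1 w, hwm] at h
    rw [← htdef, ← hsdef] at h
    linarith
  have hs0 : 0 ≤ s := Finset.sum_nonneg fun i _ => hw0 i
  have hmaster : Nb ≤ N1 - (I.card:ℝ) + t + s + (1-ε')*((J.card:ℝ) - t - s) := by
    have b1 : ∑ i ∈ I, hAB.eigenvalues i * w i ≤ (N1 - (I.card:ℝ)) + t := by
      have hterm : ∀ i ∈ I, hAB.eigenvalues i * w i ≤ (hAB.eigenvalues i - 1) + w i := by
        intro i hi
        rw [hIdef] at hi
        have h1 : 1 ≤ hAB.eigenvalues i := (Finset.mem_filter.mp hi).2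
        nlinarith [hw1 i, hw0 i]
      calc ∑ i ∈ I, hAB.eigenvalues i * w i
          ≤ ∑ i ∈ I, ((hAB.eigenvalues i - 1) + w i) := Finset.sum_le_sum hterm
      _ = (N1 - (I.card:ℝ)) + t := by
          rw [Finset.sum_add_distrib, Finset.sum_sub_distrib, Finset.sum_const, nsmul_eq_mul,
            mul_one, hN1def, htdef]
    have b2 : ∑ i ∈ I' \ I, hAB.eigenvalues i * w i ≤ s := by
      refine Finset.sum_le_sum fun i hi => ?_
      have hni : i ∉ I := (Finset.mem_sdiff.mp hi).2
      rw [hIdef] at hni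
      have h1 : hAB.eigenvalues i < 1 := by
        by_contra hge
        push_neg at hge
        exact hni (Finset.mem_filter.mpr ⟨Finset.mem_univ i, hge⟩)
      nlinarith [hw0 i]
    have b3 : ∑ i ∈ Finset.univ \ I', hAB.eigenvalues i * w i
        ≤ (1-ε') * ∑ i ∈ Finset.univ \ I', w i := by
      rw [Finset.mul_sum]
      refine Finset.sum_le_sum fun i hi => ?_
      have hni : i ∉ I' := (Finset.mem_sdiff.mp hi).2
      rw [hI'def] at hni
      have h1 : hAB.eigenvalues i < 1 - ε' := by
        by_contra hge
        push_neg at hge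
        exact hni (Finset.mem_filter.mpr ⟨Finset.mem_univ i, hge⟩)
      nlinarith [hw0 i]
    have hsp := hsplit2 (fun i => hAB.eigenvalues i * w i)
    rw [hsplit1 (fun i => hAB.eigenvalues i * w i)] at hsp
    rw [hout_w] at b3
    linarith [hW]
  have hNb1 : (1-ε₁^9)*N1 ≤ Nb := by
    rw [htrS, htrB] at hyp2
    exact hyp2
  have hnum := numeric_core (Real.log n) ε ε₀ ε₁ ε' N1 Nb (J.card:ℝ) (I.card:ℝ) t s
    hL hε (le_of_lt hεc) hε₀ hε₁ hε' hN1_1 hNb1 hNb_m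
    (by exact_mod_cast hcard) hrN1 ht_le hs0 hmaster
  have hgoal1 : sumEigAbove hAB 1 = N1 := by
    rw [hN1def, hIdef]
    rfl
  have hgoal2 : N1 + (1-ε')*s ≤ sumEigAbove hAB (1-ε') := by
    have he : sumEigAbove hAB (1-ε') = ∑ i ∈ I', hAB.eigenvalues i := by
      rw [hI'def]
      rfl
    rw [he, hsplit1 (fun i => hAB.eigenvalues i), ← hN1def]
    have hlow : (1-ε')*s ≤ ∑ i ∈ I' \ I, hAB.eigenvalues i := by
      rw [hsdef, Finset.mul_sum]
      refine Finset.sum_le_sum fun i hi => ?_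
      have hmem : i ∈ I' := (Finset.mem_sdiff.mp hi).1
      rw [hI'def] at hmem
      have h1 : 1 - ε' ≤ hAB.eigenvalues i := (Finset.mem_filter.mp hmem).2
      nlinarith [hw1 i, hw0 i, hε'1]
    linarith
  calc (1 + 2*ε/5) * sumEigAbove hAB 1 = (1+2*ε/5)*N1 := by rw [hgoal1]
  _ < N1 + (1-ε')*s := hnum
  _ ≤ sumEigAbove hAB (1-ε') := hgoal2


end MSLAux

/-- **main spectral lemma.** -/
theorem main_spectral_lemma :
    ∃ c : ℝ, 0 < c ∧ ∃ N₀ : ℕ, ∀ n : ℕ, N₀ ≤ n →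
      ∀ ε : ℝ, 0 < ε → ε < c →
      ∀ (ε₀ ε₁ ε' : ℝ),
        ε₀ = ε ^ 2 / (Real.log n) ^ 2 →
        ε₁ = 3 * ε / Real.log n →
        ε' = ε₀ / (1 + ε₀) →
      ∀ (A B : Matrix (Fin n) (Fin n) ℂ)
        (hA : A.PosSemidef) (hB : B.PosSemidef) (hAB : (A + B).IsHermitian),
        opNorm (A + B) ≤ 1 + ε₁ →
        1 ≤ opNorm B →
        ε * ((specProj hAB * (A + B)).trace).re ≤ ((specProj hAB * A).trace).re →
        (1 - ε₁ ^ 9) * ((specProj hAB * (A + B)).trace).re ≤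
          ((specProj hB.1 * B).trace).re →
        (1 + 2 * ε / 5) * sumEigAbove hAB 1 < sumEigAbove hAB (1 - ε') :=
  MSLAux.main_aux
end

section
/- In the Jordan decomposition of the space with respect to Π^B and Π^{A+B} (A, B positive semidefinite with the large-eigenvalue conditions of the main lemma), Π^{A+B} does not vanish on any of the one- or two-dimensional invariant subspaces Vᵢ; consequently tr Π^{Aᵢ+Bᵢ}(Aᵢ+Bᵢ) ≥ 1 for every i. -/
open scoped ComplexOrder
open Matrix

namespace SPaux
variable {n : ℕ}

noncomputable def ind {M : Matrix (Fin n) (Fin n) ℂ} (hM : M.IsHermitian) : Fin n → ℂ :=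
  fun j => if 1 ≤ hM.eigenvalues j then 1 else 0

lemma specProj_eq {M : Matrix (Fin n) (Fin n) ℂ} (hM : M.IsHermitian) :
    specProj hM = (hM.eigenvectorUnitary : Matrix (Fin n) (Fin n) ℂ) *
      Matrix.diagonal (ind hM) * star (hM.eigenvectorUnitary : Matrix (Fin n) (Fin n) ℂ) := by
  ext a b
  simp only [specProj, Finset.sum_apply, Matrix.sum_apply, vecMulVec_apply,
    Matrix.mul_apply, Matrix.mul_diagonal, Matrix.star_apply, Matrix.diagonal_apply,
    ind, Matrix.IsHermitian.eigenvectorUnitary_apply]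
  rw [Finset.sum_filter]
  congr 1; ext j
  by_cases h : 1 ≤ hM.eigenvalues j <;> simp [h, Pi.star_apply, mul_comm, RCLike.star_def]

lemma M_eq {M : Matrix (Fin n) (Fin n) ℂ} (hM : M.IsHermitian) :
    M = (hM.eigenvectorUnitary : Matrix (Fin n) (Fin n) ℂ) *
      Matrix.diagonal (fun j => (hM.eigenvalues j : ℂ)) *
      star (hM.eigenvectorUnitary : Matrix (Fin n) (Fin n) ℂ) :=
  hM.spectral_theorem

lemma sandwich (U D : Matrix (Fin n) (Fin n) ℂ) (hU' : star U * U = 1) :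
    star U * (U * D * star U) = D * star U := by
  rw [Matrix.mul_assoc U D, ← Matrix.mul_assoc (star U), hU', Matrix.one_mul]

lemma Phi_mul (U D1 D2 : Matrix (Fin n) (Fin n) ℂ) (hU' : star U * U = 1) :
    (U * D1 * star U) * (U * D2 * star U) = U * (D1 * D2) * star U := by
  rw [Matrix.mul_assoc (U * D1) (star U), sandwich U D2 hU', ← Matrix.mul_assoc,
    Matrix.mul_assoc U D1 D2]

lemma quad (U : Matrix (Fin n) (Fin n) ℂ) (f : Fin n → ℂ) (v : Fin n → ℂ) :
    star v ⬝ᵥ ((U * Matrix.diagonal f * star U) *ᵥ v)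
      = ∑ j, f j * (Complex.normSq ((star U *ᵥ v) j) : ℂ) := by
  set c := star U *ᵥ v with hc
  have h1 : (U * Matrix.diagonal f * star U) *ᵥ v = U *ᵥ (Matrix.diagonal f *ᵥ c) := by
    rw [hc, mulVec_mulVec, mulVec_mulVec]
  rw [h1, Matrix.dotProduct_mulVec]
  have hUs : (star U)ᴴ = U := by
    simp [Matrix.star_eq_conjTranspose]
  have h2 : star v ᵥ* U = star c := by
    rw [hc, star_mulVec, hUs]
  rw [h2]
  simp only [dotProduct, Pi.star_apply, mulVec_diagonal, RCLike.star_def]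
  congr 1; ext j
  rw [Complex.normSq_eq_conj_mul_self]
  ring

lemma quad_re (U : Matrix (Fin n) (Fin n) ℂ) (f : Fin n → ℝ) (v : Fin n → ℂ) :
    (star v ⬝ᵥ ((U * Matrix.diagonal (fun j => (f j : ℂ)) * star U) *ᵥ v)).re
      = ∑ j, f j * Complex.normSq ((star U *ᵥ v) j) := by
  rw [quad, Complex.re_sum]
  congr 1; ext j
  rw [← Complex.ofReal_mul, Complex.ofReal_re]

lemma dot_self_re (U : Matrix (Fin n) (Fin n) ℂ) (hU : U * star U = 1) (v : Fin n → ℂ) :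
    (star v ⬝ᵥ v).re = ∑ j, Complex.normSq ((star U *ᵥ v) j) := by
  have h := quad U (fun _ => 1) v
  have hd : Matrix.diagonal (fun _ : Fin n => (1:ℂ)) = 1 := Matrix.diagonal_one
  rw [hd, Matrix.mul_one, hU, Matrix.one_mulVec] at h
  rw [h, Complex.re_sum]
  simp

section herm
variable {M : Matrix (Fin n) (Fin n) ℂ} (hM : M.IsHermitian)

lemma coeff_eq {v : Fin n → ℂ} :
    star (hM.eigenvectorUnitary : Matrix (Fin n) (Fin n) ℂ) *ᵥ (specProj hM *ᵥ v)
      = Matrix.diagonal (ind hM) *ᵥ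
        (star (hM.eigenvectorUnitary : Matrix (Fin n) (Fin n) ℂ) *ᵥ v) := by
  have hU' : star (hM.eigenvectorUnitary : Matrix (Fin n) (Fin n) ℂ) *
      (hM.eigenvectorUnitary : Matrix (Fin n) (Fin n) ℂ) = 1 :=
    Matrix.mem_unitaryGroup_iff'.mp hM.eigenvectorUnitary.2
  rw [specProj_eq hM, mulVec_mulVec, sandwich _ _ hU', ← mulVec_mulVec]

lemma quadform_lt {v : Fin n → ℂ} (h0 : specProj hM *ᵥ v = 0) (hv : v ≠ 0) :
    (star v ⬝ᵥ (M *ᵥ v)).re < (star v ⬝ᵥ v).re := by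
  set U := (hM.eigenvectorUnitary : Matrix (Fin n) (Fin n) ℂ) with hUdef
  have hU : U * star U = 1 := Matrix.mem_unitaryGroup_iff.mp hM.eigenvectorUnitary.2
  set c := star U *ᵥ v with hcdef
  have hDc : Matrix.diagonal (ind hM) *ᵥ c = 0 := by
    rw [← coeff_eq hM, h0, mulVec_zero]
  have hcz : ∀ j, 1 ≤ hM.eigenvalues j → c j = 0 := by
    intro j hj
    have := congrFun hDc j
    simpa [mulVec_diagonal, ind, hj] using this
  have hcne : ∃ j, c j ≠ 0 := by
    by_contra h; push_neg at h
    apply hv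
    have hc0 : c = 0 := funext h
    have hvc : v = U *ᵥ c := by rw [hcdef, mulVec_mulVec, hU, one_mulVec]
    rw [hvc, hc0, mulVec_zero]
  obtain ⟨j0, hj0⟩ := hcne
  conv_lhs => rw [M_eq hM]
  rw [← hUdef, quad_re, dot_self_re U hU]
  simp only [← hcdef]
  apply Finset.sum_lt_sum
  · intro j _
    by_cases hj : 1 ≤ hM.eigenvalues j
    · rw [hcz j hj]; simp
    · exact mul_le_of_le_one_left (Complex.normSq_nonneg _) (le_of_lt (lt_of_not_ge hj))
  · refine ⟨j0, Finset.mem_univ _, ?_⟩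
    have hj : ¬ 1 ≤ hM.eigenvalues j0 := fun h => hj0 (hcz _ h)
    exact mul_lt_of_lt_one_left (Complex.normSq_pos.mpr hj0) (lt_of_not_ge hj)

lemma quadform_ge {v : Fin n → ℂ} (h0 : specProj hM *ᵥ v = v) :
    (star v ⬝ᵥ v).re ≤ (star v ⬝ᵥ (M *ᵥ v)).re := by
  set U := (hM.eigenvectorUnitary : Matrix (Fin n) (Fin n) ℂ) with hUdef
  have hU : U * star U = 1 := Matrix.mem_unitaryGroup_iff.mp hM.eigenvectorUnitary.2
  set c := star U *ᵥ v with hcdef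
  have hDc : Matrix.diagonal (ind hM) *ᵥ c = c := by
    rw [← coeff_eq hM, h0]
  have hcz : ∀ j, ¬ 1 ≤ hM.eigenvalues j → c j = 0 := by
    intro j hj
    have := congrFun hDc j
    simpa [mulVec_diagonal, ind, hj] using this.symm
  conv_rhs => rw [M_eq hM]
  rw [← hUdef, quad_re, dot_self_re U hU]
  simp only [← hcdef]
  apply Finset.sum_le_sum
  intro j _
  by_cases hj : 1 ≤ hM.eigenvalues j
  · exact le_mul_of_one_le_left (Complex.normSq_nonneg _) hj
  · rw [hcz j hj]; simp

lemma specProj_idem : specProj hM * specProj hM = specProj hM := by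
  have hU' : star (hM.eigenvectorUnitary : Matrix (Fin n) (Fin n) ℂ) *
      (hM.eigenvectorUnitary : Matrix (Fin n) (Fin n) ℂ) = 1 :=
    Matrix.mem_unitaryGroup_iff'.mp hM.eigenvectorUnitary.2
  have hfun : (fun i => ind hM i * ind hM i) = ind hM := by
    funext j; by_cases h : 1 ≤ hM.eigenvalues j <;> simp [ind, h]
  rw [specProj_eq hM, Phi_mul _ _ _ hU', Matrix.diagonal_mul_diagonal, hfun]

lemma trace_ge_one
    (hex : ∃ v : Fin n → ℂ, v ≠ 0 ∧ (star v ⬝ᵥ v).re ≤ (star v ⬝ᵥ (M *ᵥ v)).re) :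
    1 ≤ ((specProj hM * M).trace).re := by
  set U := (hM.eigenvectorUnitary : Matrix (Fin n) (Fin n) ℂ) with hUdef
  have hU' : star U * U = 1 := Matrix.mem_unitaryGroup_iff'.mp hM.eigenvectorUnitary.2
  have hS : (Finset.univ.filter (fun j => 1 ≤ hM.eigenvalues j)).Nonempty := by
    by_contra h
    rw [Finset.not_nonempty_iff_eq_empty] at h
    have hz : specProj hM = 0 := by rw [specProj, h, Finset.sum_empty]
    obtain ⟨v, hv, hle⟩ := hex
    have := quadform_lt hM (by rw [hz, Matrix.zero_mulVec]) hv
    linarith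
  have hprod : specProj hM * M = U * Matrix.diagonal (fun j => ind hM j * (hM.eigenvalues j : ℂ)) * star U := by
    have h1 : specProj hM * M =
        (U * Matrix.diagonal (ind hM) * star U) *
        (U * Matrix.diagonal (fun j => (hM.eigenvalues j : ℂ)) * star U) :=
      congrArg₂ HMul.hMul (specProj_eq hM) (M_eq hM)
    rw [h1, Phi_mul _ _ _ hU', Matrix.diagonal_mul_diagonal]
  have htr : ((specProj hM * M).trace).re
      = ∑ j ∈ Finset.univ.filter (fun j => 1 ≤ hM.eigenvalues j), hM.eigenvalues j := by
    rw [hprod, Matrix.trace_mul_comm, ← Matrix.mul_assoc, hU', Matrix.one_mul,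
      Matrix.trace_diagonal, Complex.re_sum, Finset.sum_filter]
    congr 1; funext j
    by_cases h : 1 ≤ hM.eigenvalues j <;> simp [ind, h]
  rw [htr]
  calc (1:ℝ) ≤ (Finset.univ.filter (fun j => 1 ≤ hM.eigenvalues j)).card := by
        exact_mod_cast Finset.card_pos.mpr hS
    _ = ∑ j ∈ Finset.univ.filter (fun j => 1 ≤ hM.eigenvalues j), (1:ℝ) := by
        simp
    _ ≤ ∑ j ∈ Finset.univ.filter (fun j => 1 ≤ hM.eigenvalues j), hM.eigenvalues j :=
        Finset.sum_le_sum (fun j hj => (Finset.mem_filter.mp hj).2)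

end herm

lemma exists_vec {n : ℕ} {P : Matrix (Fin n) (Fin n) ℂ} (hP : P ≠ 0) :
    ∃ w : Fin n → ℂ, P *ᵥ w ≠ 0 := by
  by_contra h
  push_neg at h
  apply hP
  ext a b
  have := congrFun (h (Pi.single b 1)) a
  simpa [Matrix.mulVec_single] using this

end SPaux


open Matrix SPaux in
/-- In the Jordan decomposition of the space with respect to
`Π^B` and `Π^{A+B}` (`A, B` positive semidefinite, the space decomposing into
mutually orthogonal subspaces `Vᵢ` invariant under both projectors — with at
least one of the two not vanishing on each `Vᵢ` — and `W` where both vanish),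
the projector `Π^{A+B}` does not vanish on any `Vᵢ`; consequently
`tr Π^{Aᵢ+Bᵢ}(Aᵢ+Bᵢ) ≥ 1` for every `i`, where `Aᵢ = VᵢAVᵢ`, `Bᵢ = VᵢBVᵢ`. -/
theorem specProj_nonvanishing
    {n k : ℕ} (A B : Matrix (Fin n) (Fin n) ℂ)
    (hA : A.PosSemidef) (hB : B.PosSemidef) (hAB : (A + B).IsHermitian)
    (V : Fin k → Matrix (Fin n) (Fin n) ℂ) (W : Matrix (Fin n) (Fin n) ℂ)
    (hV : ∀ i, (V i).IsHermitian ∧ V i * V i = V i)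
    (hW : W.IsHermitian ∧ W * W = W)
    (horth : ∀ i j, i ≠ j → V i * V j = 0)
    (horthW : ∀ i, V i * W = 0)
    (hsum : ∑ i, V i + W = 1)
    (hinvB : ∀ i, specProj hB.1 * V i = V i * specProj hB.1)
    (hinvAB : ∀ i, specProj hAB * V i = V i * specProj hAB)
    (hWB : specProj hB.1 * W = 0)
    (hWAB : specProj hAB * W = 0)
    (hnz : ∀ i, specProj hB.1 * V i ≠ 0 ∨ specProj hAB * V i ≠ 0)
    (hABi : ∀ i, (V i * (A + B) * V i).IsHermitian) :
    ∀ i, specProj hAB * V i ≠ 0 ∧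
      1 ≤ ((specProj (hABi i) * (V i * (A + B) * V i)).trace).re := by
  intro i
  -- a common computation: V i absorbs vectors in the range of (specProj h * V i)
  have habsorb : ∀ (P : Matrix (Fin n) (Fin n) ℂ), P * V i = V i * P →
      V i * (P * V i) = P * V i := by
    intro P hcomm
    rw [← Matrix.mul_assoc, ← hcomm, Matrix.mul_assoc, (hV i).2]
  have key1 : specProj hAB * V i ≠ 0 := by
    intro h0
    have hBnz : specProj hB.1 * V i ≠ 0 := (hnz i).resolve_right (fun h => h h0)
    obtain ⟨w, hw⟩ := exists_vec hBnz
    set v : Fin n → ℂ := (specProj hB.1 * V i) *ᵥ w with hvdef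
    have hVv : V i *ᵥ v = v := by
      rw [hvdef, mulVec_mulVec, habsorb _ (hinvB i)]
    have hPBv : specProj hB.1 *ᵥ v = v := by
      rw [hvdef, mulVec_mulVec, ← Matrix.mul_assoc, specProj_idem hB.1]
    have hPABv : specProj hAB *ᵥ v = 0 := by
      conv_lhs => rw [← hVv]
      rw [mulVec_mulVec, h0, Matrix.zero_mulVec]
    have h1 : (star v ⬝ᵥ ((A + B) *ᵥ v)).re < (star v ⬝ᵥ v).re :=
      quadform_lt hAB hPABv hw
    have h2 : (star v ⬝ᵥ v).re ≤ (star v ⬝ᵥ (B *ᵥ v)).re :=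
      quadform_ge hB.1 hPBv
    have h3 : 0 ≤ (star v ⬝ᵥ (A *ᵥ v)).re := by
      have := hA.dotProduct_mulVec_nonneg v
      exact (Complex.le_def.mp this).1
    have h4 : (star v ⬝ᵥ ((A + B) *ᵥ v)).re
        = (star v ⬝ᵥ (A *ᵥ v)).re + (star v ⬝ᵥ (B *ᵥ v)).re := by
      rw [Matrix.add_mulVec, dotProduct_add, Complex.add_re]
    linarith
  refine ⟨key1, ?_⟩
  obtain ⟨w, hw⟩ := exists_vec key1
  set v : Fin n → ℂ := (specProj hAB * V i) *ᵥ w with hvdef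
  have hVv : V i *ᵥ v = v := by
    rw [hvdef, mulVec_mulVec, habsorb _ (hinvAB i)]
  have hPABv : specProj hAB *ᵥ v = v := by
    rw [hvdef, mulVec_mulVec, ← Matrix.mul_assoc, specProj_idem hAB]
  have h2 : (star v ⬝ᵥ v).re ≤ (star v ⬝ᵥ ((A + B) *ᵥ v)).re :=
    quadform_ge hAB hPABv
  have hsv : star v ᵥ* V i = star v := by
    conv_lhs => rw [← (hV i).1]
    rw [← star_mulVec, hVv]
  have h5 : star v ⬝ᵥ ((V i * (A + B) * V i) *ᵥ v) = star v ⬝ᵥ ((A + B) *ᵥ v) := by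
    rw [← mulVec_mulVec, ← mulVec_mulVec, hVv, Matrix.dotProduct_mulVec, hsv]
  exact trace_ge_one (hABi i) ⟨v, hw, by rw [h5]; exact h2⟩
end
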